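/- arXiv:1304.3671 — 3 statements merged into one kernel-verified Lean document; each statement's English description precedes it below -/
import Mathlib

section
/- Let P be a set of point trajectories satisfying the pseudo-algebraic and general position assumptions, and let p,q,a,b ∈ P be distinct. Suppose that the Delaunayhood of pq is violated by a and b (with a ∈ L⁻_pq and b ∈ L⁺_pq) at all times in some nonempty interval (t₀, t₀+δ), and that pq is Delaunay with respect to P at some time t₁ > t₀. Then at least one of the following occurs at some time in (t₀, t₁]: (1) a lies on the segment p(t)q(t), crossing it from L⁻_pq to L⁺_pq; (2) b lies on the segment p(t)q(t), crossing it from L⁺_pq to L⁻_pq; (3) the four points p,q,a,b are concyclic, with a and b strictly on opposite sides of the line through p and q. -/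
/-!
Kinetic Delaunay triangulations of points moving in the plane:
common definitions (trajectories, Delaunay edges, co-circularity and
collinearity events, general position assumptions, Delaunay crossings).
-/

noncomputable section

attribute [local instance] Classical.propDecidable

/-- The Euclidean plane. -/
abbrev Plane : Type := EuclideanSpace ℝ (Fin 2)

/-- A point trajectory: a moving point in the plane, parametrized by time. -/
abbrev Traj : Type := ℝ → Plane

/-- Signed orientation of `x` with respect to the line through `a` and `b`,
oriented from `a` to `b`; positive iff `x` lies in the open left halfplane `L⁻`. -/
def orient (a b x : Plane) : ℝ :=
  (b 0 - a 0) * (x 1 - a 1) - (b 1 - a 1) * (x 0 - a 0)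

/-- `x` lies in the open left halfplane `L⁻` of the line oriented from `a` to `b`. -/
def leftOf (a b x : Plane) : Prop := 0 < orient a b x

/-- `x` lies in the open right halfplane `L⁺` of the line oriented from `a` to `b`. -/
def rightOf (a b x : Plane) : Prop := orient a b x < 0

/-- `x` and `y` lie strictly on opposite sides of the line through `a` and `b`. -/
def OppositeSides (a b x y : Plane) : Prop := orient a b x * orient a b y < 0

/-- Four points of the plane are concyclic. -/
def Concyclic4 (a b c d : Plane) : Prop :=
  ∃ (o : Plane) (ρ : ℝ), 0 < ρ ∧
    dist a o = ρ ∧ dist b o = ρ ∧ dist c o = ρ ∧ dist d o = ρ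

/-- Five points of the plane are concyclic. -/
def Concyclic5 (a b c d e : Plane) : Prop :=
  ∃ (o : Plane) (ρ : ℝ), 0 < ρ ∧
    dist a o = ρ ∧ dist b o = ρ ∧ dist c o = ρ ∧ dist d o = ρ ∧ dist e o = ρ

/-- `x` lies in the open circumdisc of `a`, `b`, `c` (for non-collinear `a`, `b`, `c`
the circle through them is unique, so this is the usual notion). -/
def InCircumdisc (a b c x : Plane) : Prop :=
  ∃ (o : Plane) (ρ : ℝ), dist a o = ρ ∧ dist b o = ρ ∧ dist c o = ρ ∧ dist x o < ρ

/-- `x` lies strictly outside the circumdisc of `a`, `b`, `c`. -/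
def OutCircumdisc (a b c x : Plane) : Prop :=
  ∃ (o : Plane) (ρ : ℝ), dist a o = ρ ∧ dist b o = ρ ∧ dist c o = ρ ∧ ρ < dist x o

/-- The edge `pq` is Delaunay at time `t` with respect to the set `Q` of trajectories:
there is a closed disc whose boundary circle passes through `p t` and `q t` and whose
interior contains no point of `Q` at time `t`. -/
def DelaunayEdge (Q : Finset Traj) (p q : Traj) (t : ℝ) : Prop :=
  ∃ (o : Plane) (ρ : ℝ), dist (p t) o = ρ ∧ dist (q t) o = ρ ∧
    ∀ x ∈ Q, ¬ dist (x t) o < ρ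

/-- The four moving points `p, q, a, b` are concyclic at time `t`
(a co-circularity event). -/
def CocircAt (p q a b : Traj) (t : ℝ) : Prop :=
  Concyclic4 (p t) (q t) (a t) (b t)

/-- The three moving points `p, q, r` are collinear at time `t`
(a collinearity event). -/
def CollinAt (p q r : Traj) (t : ℝ) : Prop :=
  Collinear ℝ ({p t, q t, r t} : Set Plane)

/-- Pairwise distinctness of four trajectories. -/
def Distinct4 (p q a b : Traj) : Prop :=
  p ≠ q ∧ p ≠ a ∧ p ≠ b ∧ q ≠ a ∧ q ≠ b ∧ a ≠ b

/-- Pairwise distinctness of three trajectories. -/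
def Distinct3 (p q r : Traj) : Prop := p ≠ q ∧ p ≠ r ∧ q ≠ r

/-- The Delaunayhood of the edge `xy` is violated by the pair `u`, `v` at time `t`:
`u t` and `v t` lie strictly on opposite sides of the line through `x t` and `y t`,
and `v t` lies in the open circumdisc of `x t`, `y t`, `u t`. -/
def ViolatedBy (x y u v : Traj) (t : ℝ) : Prop :=
  OppositeSides (x t) (y t) (u t) (v t) ∧ InCircumdisc (x t) (y t) (u t) (v t)

/-- General position assumptions on a finite set of moving points: the motions are
continuous, no two points ever coincide, no five points are ever concyclic, no four
are ever collinear, no two co-circularity or collinearity events occur simultaneously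
and, at each such event, the involved point crosses the relevant circle or line
transversally. -/
structure GenPos (P : Finset Traj) : Prop where
  cont : ∀ p ∈ P, Continuous p
  never_coincide : ∀ p ∈ P, ∀ q ∈ P, p ≠ q → ∀ t : ℝ, p t ≠ q t
  no_five_cocirc : ∀ t : ℝ, ∀ p ∈ P, ∀ q ∈ P, ∀ a ∈ P, ∀ b ∈ P, ∀ e ∈ P,
    Distinct4 p q a b → p ≠ e → q ≠ e → a ≠ e → b ≠ e →
    ¬ Concyclic5 (p t) (q t) (a t) (b t) (e t)
  no_four_collin : ∀ t : ℝ, ∀ p ∈ P, ∀ q ∈ P, ∀ a ∈ P, ∀ b ∈ P,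
    Distinct4 p q a b → ¬ Collinear ℝ ({p t, q t, a t, b t} : Set Plane)
  unique_cocirc : ∀ t : ℝ, ∀ p ∈ P, ∀ q ∈ P, ∀ a ∈ P, ∀ b ∈ P,
    ∀ p' ∈ P, ∀ q' ∈ P, ∀ a' ∈ P, ∀ b' ∈ P,
    Distinct4 p q a b → Distinct4 p' q' a' b' →
    CocircAt p q a b t → CocircAt p' q' a' b' t →
    ({p, q, a, b} : Set Traj) = ({p', q', a', b'} : Set Traj)
  unique_collin : ∀ t : ℝ, ∀ p ∈ P, ∀ q ∈ P, ∀ r ∈ P, ∀ p' ∈ P, ∀ q' ∈ P, ∀ r' ∈ P,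
    Distinct3 p q r → Distinct3 p' q' r' →
    CollinAt p q r t → CollinAt p' q' r' t →
    ({p, q, r} : Set Traj) = ({p', q', r'} : Set Traj)
  cocirc_collin_separate : ∀ t : ℝ, ∀ p ∈ P, ∀ q ∈ P, ∀ a ∈ P, ∀ b ∈ P,
    ∀ p' ∈ P, ∀ q' ∈ P, ∀ r' ∈ P,
    Distinct4 p q a b → Distinct3 p' q' r' →
    CocircAt p q a b t → ¬ CollinAt p' q' r' t
  circle_transversal : ∀ p ∈ P, ∀ q ∈ P, ∀ a ∈ P, ∀ b ∈ P, Distinct4 p q a b →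
    ∀ t : ℝ, CocircAt p q a b t →
    ∃ δ > (0 : ℝ),
      ((∀ u ∈ Set.Ioo (t - δ) t, InCircumdisc (p u) (q u) (a u) (b u)) ∧
        (∀ u ∈ Set.Ioo t (t + δ), OutCircumdisc (p u) (q u) (a u) (b u))) ∨
      ((∀ u ∈ Set.Ioo (t - δ) t, OutCircumdisc (p u) (q u) (a u) (b u)) ∧
        (∀ u ∈ Set.Ioo t (t + δ), InCircumdisc (p u) (q u) (a u) (b u)))
  line_transversal : ∀ p ∈ P, ∀ q ∈ P, ∀ r ∈ P, Distinct3 p q r →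
    ∀ t : ℝ, CollinAt p q r t →
    ∃ δ > (0 : ℝ),
      ((∀ u ∈ Set.Ioo (t - δ) t, leftOf (p u) (q u) (r u)) ∧
        (∀ u ∈ Set.Ioo t (t + δ), rightOf (p u) (q u) (r u))) ∨
      ((∀ u ∈ Set.Ioo (t - δ) t, rightOf (p u) (q u) (r u)) ∧
        (∀ u ∈ Set.Ioo t (t + δ), leftOf (p u) (q u) (r u)))

/-- Pseudo-algebraicity: any four points of `P` are concyclic at most `s` times. -/
def CocircBound (P : Finset Traj) (s : ℕ) : Prop :=
  ∀ p ∈ P, ∀ q ∈ P, ∀ a ∈ P, ∀ b ∈ P, Distinct4 p q a b →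
    {t : ℝ | CocircAt p q a b t}.encard ≤ (s : ℕ∞)

/-- Pseudo-algebraicity: any three points of `P` are collinear at most `c` times. -/
def CollinBound (P : Finset Traj) (c : ℕ) : Prop :=
  ∀ p ∈ P, ∀ q ∈ P, ∀ r ∈ P, Distinct3 p q r →
    {t : ℝ | CollinAt p q r t}.encard ≤ (c : ℕ∞)

/-- A Delaunay co-circularity event of `P` occurs at time `t`: some four (distinct)
points of `P` are concyclic at time `t`, and the open disc bounded by their common
circle contains no point of `P` at time `t`. -/
def DelaunayCocircAt (P : Finset Traj) (t : ℝ) : Prop :=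
  ∃ p ∈ P, ∃ q ∈ P, ∃ a ∈ P, ∃ b ∈ P, Distinct4 p q a b ∧
    ∃ (o : Plane) (ρ : ℝ), 0 < ρ ∧
      dist (p t) o = ρ ∧ dist (q t) o = ρ ∧ dist (a t) o = ρ ∧ dist (b t) o = ρ ∧
      ∀ x ∈ P, ¬ dist (x t) o < ρ

/-- A `k`-shallow co-circularity of `p, q, a, b` at time `t`: the four points are
concyclic and the open disc bounded by their common circle contains at most `k`
points of `P` at time `t`. -/
def ShallowCocircAt (P : Finset Traj) (k : ℕ) (p q a b : Traj) (t : ℝ) : Prop :=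
  ∃ (o : Plane) (ρ : ℝ), 0 < ρ ∧
    dist (p t) o = ρ ∧ dist (q t) o = ρ ∧ dist (a t) o = ρ ∧ dist (b t) o = ρ ∧
    {x : Traj | x ∈ P ∧ dist (x t) o < ρ}.ncard ≤ k

/-- A `k`-shallow collinearity of `p, q, r` at time `t`: the three points are
collinear and one of the two open halfplanes bounded by the line through them
contains at most `k` points of `P` at time `t`. -/
def ShallowCollinAt (P : Finset Traj) (k : ℕ) (p q r : Traj) (t : ℝ) : Prop :=
  CollinAt p q r t ∧ p t ≠ q t ∧
    ({x : Traj | x ∈ P ∧ leftOf (p t) (q t) (x t)}.ncard ≤ k ∨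
      {x : Traj | x ∈ P ∧ rightOf (p t) (q t) (x t)}.ncard ≤ k)

/-- At time `t`, the point `r` lies on the segment `pq` and crosses it transversally
from the open halfplane `L⁻` (left of the oriented line `pq`) to `L⁺`. -/
def CrossesMinusPlus (p q r : Traj) (t : ℝ) : Prop :=
  r t ∈ segment ℝ (p t) (q t) ∧
    ∃ δ > (0 : ℝ),
      (∀ u ∈ Set.Ioo (t - δ) t, leftOf (p u) (q u) (r u)) ∧
      (∀ u ∈ Set.Ioo t (t + δ), rightOf (p u) (q u) (r u))

/-- At time `t`, the point `r` lies on the segment `pq` and crosses it transversally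
from `L⁺` to `L⁻`. -/
def CrossesPlusMinus (p q r : Traj) (t : ℝ) : Prop :=
  r t ∈ segment ℝ (p t) (q t) ∧
    ∃ δ > (0 : ℝ),
      (∀ u ∈ Set.Ioo (t - δ) t, rightOf (p u) (q u) (r u)) ∧
      (∀ u ∈ Set.Ioo t (t + δ), leftOf (p u) (q u) (r u))

/-- A Delaunay crossing `(pq, r, [t₀, t₁])`: the edge `pq` is Delaunay with respect
to `P` at times `t₀` and `t₁` but at no time in `(t₀, t₁)`; `r` lies on the closed
segment `pq` at least once during `[t₀, t₁]`; and `pq` is Delaunay with respect to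
`P ∖ {r}` throughout `[t₀, t₁]`. -/
structure DelaunayCrossing (P : Finset Traj) (p q r : Traj) (t₀ t₁ : ℝ) : Prop where
  lt : t₀ < t₁
  mem_p : p ∈ P
  mem_q : q ∈ P
  mem_r : r ∈ P
  distinct : Distinct3 p q r
  del_start : DelaunayEdge P p q t₀
  del_end : DelaunayEdge P p q t₁
  not_del : ∀ t ∈ Set.Ioo t₀ t₁, ¬ DelaunayEdge P p q t
  hits : ∃ t ∈ Set.Icc t₀ t₁, r t ∈ segment ℝ (p t) (q t)
  del_erase : ∀ t ∈ Set.Icc t₀ t₁, DelaunayEdge (P.erase r) p q t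

/-- A single Delaunay crossing, with the convention that `r` crosses the segment
`pq` from `L⁻` to `L⁺`: a Delaunay crossing in which `r` lies on the segment `pq`
at exactly one time of `[t₀, t₁]`, where it crosses from `L⁻` to `L⁺`.
(It is a clockwise `(p, r)`-crossing and a counterclockwise `(q, r)`-crossing.) -/
structure SingleCrossing (P : Finset Traj) (p q r : Traj) (t₀ t₁ : ℝ) : Prop where
  crossing : DelaunayCrossing P p q r t₀ t₁
  unique_hit : ∀ t ∈ Set.Icc t₀ t₁, ∀ t' ∈ Set.Icc t₀ t₁,
    r t ∈ segment ℝ (p t) (q t) → r t' ∈ segment ℝ (p t') (q t') → t = t'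
  dir : ∀ t ∈ Set.Icc t₀ t₁, r t ∈ segment ℝ (p t) (q t) → CrossesMinusPlus p q r t

/-- A double Delaunay crossing: a Delaunay crossing in which `r` lies on the
segment `pq` at exactly two times of `[t₀, t₁]`. -/
structure DoubleCrossing (P : Finset Traj) (p q r : Traj) (t₀ t₁ : ℝ) : Prop where
  crossing : DelaunayCrossing P p q r t₀ t₁
  two_hits : ∃ u v : ℝ, u ∈ Set.Icc t₀ t₁ ∧ v ∈ Set.Icc t₀ t₁ ∧ u ≠ v ∧
    r u ∈ segment ℝ (p u) (q u) ∧ r v ∈ segment ℝ (p v) (q v) ∧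
    ∀ t ∈ Set.Icc t₀ t₁, r t ∈ segment ℝ (p t) (q t) → t = u ∨ t = v

/-- The point `s` enters the cap `B[p,q,r] ∩ L⁺_pq` at time `t`: just before `t` it
lies strictly outside the circumdisc `B[p,q,r]`, and just after `t` it lies inside
`B[p,q,r]` and in the open right halfplane `L⁺` of the oriented line `pq`. -/
def EntersCapPlus (p q r s : Traj) (t : ℝ) : Prop :=
  ∃ δ > (0 : ℝ),
    (∀ u ∈ Set.Ioo (t - δ) t, OutCircumdisc (p u) (q u) (r u) (s u)) ∧
    (∀ u ∈ Set.Ioo t (t + δ),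
      InCircumdisc (p u) (q u) (r u) (s u) ∧ rightOf (p u) (q u) (s u))

/-- The point `s` leaves the cap `B[p,q,r] ∩ L⁻_pq` at time `t`: just before `t` it
lies inside the circumdisc `B[p,q,r]` and in the open left halfplane `L⁻` of the
oriented line `pq`, and just after `t` it lies strictly outside `B[p,q,r]`. -/
def LeavesCapMinus (p q r s : Traj) (t : ℝ) : Prop :=
  ∃ δ > (0 : ℝ),
    (∀ u ∈ Set.Ioo (t - δ) t,
      InCircumdisc (p u) (q u) (r u) (s u) ∧ leftOf (p u) (q u) (s u)) ∧
    (∀ u ∈ Set.Ioo t (t + δ), OutCircumdisc (p u) (q u) (r u) (s u))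


namespace St2Aux

lemma distSq (x y : Plane) : dist x y ^ 2 = (x 0 - y 0)^2 + (x 1 - y 1)^2 := by
  rw [EuclideanSpace.dist_eq, Real.sq_sqrt (by positivity)]
  simp [Fin.sum_univ_two, Real.dist_eq, sq_abs]

/-- The "incircle" quantity for the edge `pq` and the pair `a`, `b`. -/
def dd (p q a b : Plane) : ℝ :=
  orient p q b * ((a 0 - p 0)*(a 0 - q 0) + (a 1 - p 1)*(a 1 - q 1))
  - orient p q a * ((b 0 - p 0)*(b 0 - q 0) + (b 1 - p 1)*(b 1 - q 1))

/-- Laplace/pencil identity: powers of `a`, `b` w.r.t. any circle through `p`, `q`. -/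
lemma key (p q a b o : Plane) (rho : ℝ) (hp : dist p o = rho) (hq : dist q o = rho) :
    dd p q a b = orient p q b * (dist a o ^ 2 - rho^2)
      - orient p q a * (dist b o ^ 2 - rho^2) := by
  have hp2 : (p 0 - o 0)^2 + (p 1 - o 1)^2 = rho^2 := by rw [← distSq, hp]
  have hq2 : (q 0 - o 0)^2 + (q 1 - o 1)^2 = rho^2 := by rw [← distSq, hq]
  rw [distSq a o, distSq b o]
  simp only [dd, orient]
  linear_combination
    ((a 0 - q 0) * (b 1 - q 1) - (a 1 - q 1) * (b 0 - q 0)) * hp2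
    - ((a 0 - p 0) * (b 1 - p 1) - (a 1 - p 1) * (b 0 - p 0)) * hq2

/-- Circumcenter existence for non-collinear points. -/
lemma circumcenter (p q a : Plane) (hf : orient p q a ≠ 0) :
    ∃ o : Plane, dist p o = dist q o ∧ dist a o = dist p o := by
  have hf' : (q 0 - p 0) * (a 1 - p 1) - (q 1 - p 1) * (a 0 - p 0) ≠ 0 := hf
  set ox : ℝ := ((q 0^2 + q 1^2 - p 0^2 - p 1^2) * (a 1 - p 1)
      - (a 0^2 + a 1^2 - p 0^2 - p 1^2) * (q 1 - p 1)) /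
      (2 * ((q 0 - p 0) * (a 1 - p 1) - (q 1 - p 1) * (a 0 - p 0))) with hox
  set oy : ℝ := ((q 0 - p 0) * (a 0^2 + a 1^2 - p 0^2 - p 1^2)
      - (a 0 - p 0) * (q 0^2 + q 1^2 - p 0^2 - p 1^2)) /
      (2 * ((q 0 - p 0) * (a 1 - p 1) - (q 1 - p 1) * (a 0 - p 0))) with hoy
  set o : Plane := (WithLp.equiv 2 (Fin 2 → ℝ)).symm ![ox, oy] with ho
  have h0 : o 0 = ox := by rw [ho]; simp [WithLp.equiv_symm_apply]
  have h1 : o 1 = oy := by rw [ho]; simp [WithLp.equiv_symm_apply]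
  refine ⟨o, ?_, ?_⟩
  · have hsq : dist p o ^ 2 = dist q o ^ 2 := by
      rw [distSq, distSq, h0, h1, hox, hoy]
      have hf'' : (a 1 - p 1) * (q 0 - p 0) - (q 1 - p 1) * (a 0 - p 0) ≠ 0 := by
        intro h; apply hf'; linarith
      field_simp
      ring
    nlinarith [dist_nonneg (x := p) (y := o), dist_nonneg (x := q) (y := o)]
  · have hsq : dist a o ^ 2 = dist p o ^ 2 := by
      rw [distSq, distSq, h0, h1, hox, hoy]
      have hf'' : (a 1 - p 1) * (q 0 - p 0) - (q 1 - p 1) * (a 0 - p 0) ≠ 0 := by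
        intro h; apply hf'; linarith
      field_simp
      ring
    nlinarith [dist_nonneg (x := a) (y := o), dist_nonneg (x := p) (y := o)]

lemma ne_coord {p q : Plane} (h : p ≠ q) :
    0 < (q 0 - p 0)^2 + (q 1 - p 1)^2 := by
  rcases lt_or_eq_of_le (by positivity : (0:ℝ) ≤ (q 0 - p 0)^2 + (q 1 - p 1)^2) with h1 | h1
  · exact h1
  · exfalso
    apply h
    have h0 : q 0 - p 0 = 0 := by nlinarith [sq_nonneg (q 0 - p 0), sq_nonneg (q 1 - p 1)]
    have h1' : q 1 - p 1 = 0 := by nlinarith [sq_nonneg (q 0 - p 0), sq_nonneg (q 1 - p 1)]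
    ext i
    fin_cases i <;> simp_all <;> linarith

/-- Representation of a point on the line `pq`. -/
lemma rep {p q a : Plane} (hpq : p ≠ q) (h : orient p q a = 0) :
    ∃ s : ℝ, a = s • (q - p) + p := by
  have hd := ne_coord hpq
  set d2 := (q 0 - p 0)^2 + (q 1 - p 1)^2 with hd2
  refine ⟨((a 0 - p 0) * (q 0 - p 0) + (a 1 - p 1) * (q 1 - p 1)) / d2, ?_⟩
  have h' : (q 0 - p 0) * (a 1 - p 1) - (q 1 - p 1) * (a 0 - p 0) = 0 := h
  ext i
  fin_cases i <;>
    simp only [PiLp.add_apply, PiLp.smul_apply, PiLp.sub_apply, smul_eq_mul]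
  · show a 0 = _ * (q 0 - p 0) + p 0
    field_simp
    linear_combination (-(q 1 - p 1)) * h'
  · show a 1 = _ * (q 1 - p 1) + p 1
    field_simp
    linear_combination (q 0 - p 0) * h'

lemma collin3 {p q a : Plane} (hpq : p ≠ q) (h : orient p q a = 0) :
    Collinear ℝ ({p, q, a} : Set Plane) := by
  obtain ⟨s, hs⟩ := rep hpq h
  rw [collinear_iff_of_mem (Set.mem_insert p _)]
  refine ⟨q - p, ?_⟩
  rintro x (rfl | rfl | rfl)
  · exact ⟨0, by simp⟩
  · exact ⟨1, by simp⟩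
  · exact ⟨s, hs⟩

lemma collin4 {p q a b : Plane} (hpq : p ≠ q) (ha : orient p q a = 0)
    (hb : orient p q b = 0) : Collinear ℝ ({p, q, a, b} : Set Plane) := by
  obtain ⟨s, hs⟩ := rep hpq ha
  obtain ⟨u, hu⟩ := rep hpq hb
  rw [collinear_iff_of_mem (Set.mem_insert p _)]
  refine ⟨q - p, ?_⟩
  rintro x (rfl | rfl | rfl | rfl)
  · exact ⟨0, by simp⟩
  · exact ⟨1, by simp⟩
  · exact ⟨s, hs⟩
  · exact ⟨u, hu⟩

lemma mem_seg {p q a : Plane} (hpq : p ≠ q) (h : orient p q a = 0)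
    (hdot : (a 0 - p 0)*(a 0 - q 0) + (a 1 - p 1)*(a 1 - q 1) ≤ 0) :
    a ∈ segment ℝ p q := by
  obtain ⟨s, hs⟩ := rep hpq h
  have hd := ne_coord hpq
  have h0 : a 0 = s * (q 0 - p 0) + p 0 := by
    rw [hs]; simp [PiLp.add_apply, PiLp.smul_apply, PiLp.sub_apply]
  have h1 : a 1 = s * (q 1 - p 1) + p 1 := by
    rw [hs]; simp [PiLp.add_apply, PiLp.smul_apply, PiLp.sub_apply]
  have hss : s * (s - 1) * ((q 0 - p 0)^2 + (q 1 - p 1)^2) ≤ 0 := by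
    rw [h0, h1] at hdot; nlinarith [hdot]
  have hss' : s * (s - 1) ≤ 0 := by
    by_contra hc
    push_neg at hc
    nlinarith
  have hs0 : 0 ≤ s := by nlinarith
  have hs1 : s ≤ 1 := by nlinarith
  refine ⟨1 - s, s, by linarith, hs0, by ring, ?_⟩
  ext i
  fin_cases i <;>
    simp only [PiLp.add_apply, PiLp.smul_apply, smul_eq_mul]
  · show (1-s) * p 0 + s * q 0 = a 0
    rw [h0]; ring
  · show (1-s) * p 1 + s * q 1 = a 1
    rw [h1]; ring

lemma left_lim {F : ℝ → ℝ} (hF : Continuous F) {t' τ : ℝ} (h : t' < τ)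
    (hpos : ∀ t, t' ≤ t → t < τ → 0 < F t) : 0 ≤ F τ := by
  have hten : Filter.Tendsto F (nhdsWithin τ (Set.Iio τ)) (nhds (F τ)) :=
    (hF.tendsto τ).mono_left nhdsWithin_le_nhds
  refine ge_of_tendsto hten ?_
  filter_upwards [Ioo_mem_nhdsLT_of_mem (Set.mem_Ioc.2 ⟨h, le_refl τ⟩)] with u hu
  exact (hpos u hu.1.le hu.2).le

end St2Aux

/-- (Lemma 3.1 of the paper.) If the Delaunayhood of `pq` is
violated by `a ∈ L⁻_pq` and `b ∈ L⁺_pq` throughout some nonempty interval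
`(t₀, t₀+δ)`, and `pq` is Delaunay at some later time `t₁ > t₀`, then during
`(t₀,t₁]` either `a` crosses the segment `pq` from `L⁻` to `L⁺`, or `b` crosses it
from `L⁺` to `L⁻`, or `p,q,a,b` are concyclic with `a`, `b` on opposite sides of the
line through `p` and `q`. -/
theorem statement2 (s c : ℕ) (P : Finset Traj)
    (hP : GenPos P) (hs : CocircBound P s) (hc : CollinBound P c)
    (p q a b : Traj) (hp : p ∈ P) (hq : q ∈ P) (ha : a ∈ P) (hb : b ∈ P)
    (hd : Distinct4 p q a b)
    (t₀ δ : ℝ) (hδ : 0 < δ)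
    (hviol : ∀ t ∈ Set.Ioo t₀ (t₀ + δ),
      leftOf (p t) (q t) (a t) ∧ rightOf (p t) (q t) (b t) ∧
        InCircumdisc (p t) (q t) (a t) (b t))
    (t₁ : ℝ) (ht : t₀ < t₁) (hdel : DelaunayEdge P p q t₁) :
    ∃ t ∈ Set.Ioc t₀ t₁,
      CrossesMinusPlus p q a t ∨
      CrossesPlusMinus p q b t ∨
      (CocircAt p q a b t ∧ OppositeSides (p t) (q t) (a t) (b t)) := by
  
  classical
  obtain ⟨hpq, hpa, hpb, hqa, hqb, hab⟩ := hd
  -- continuity of coordinates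
  have hcp := hP.cont p hp
  have hcq := hP.cont q hq
  have hca := hP.cont a ha
  have hcb := hP.cont b hb
  have cp0 : Continuous fun t => p t 0 := (continuous_apply 0).comp ((PiLp.continuous_ofLp 2 _).comp hcp)
  have cp1 : Continuous fun t => p t 1 := (continuous_apply 1).comp ((PiLp.continuous_ofLp 2 _).comp hcp)
  have cq0 : Continuous fun t => q t 0 := (continuous_apply 0).comp ((PiLp.continuous_ofLp 2 _).comp hcq)
  have cq1 : Continuous fun t => q t 1 := (continuous_apply 1).comp ((PiLp.continuous_ofLp 2 _).comp hcq)
  have ca0 : Continuous fun t => a t 0 := (continuous_apply 0).comp ((PiLp.continuous_ofLp 2 _).comp hca)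
  have ca1 : Continuous fun t => a t 1 := (continuous_apply 1).comp ((PiLp.continuous_ofLp 2 _).comp hca)
  have cb0 : Continuous fun t => b t 0 := (continuous_apply 0).comp ((PiLp.continuous_ofLp 2 _).comp hcb)
  have cb1 : Continuous fun t => b t 1 := (continuous_apply 1).comp ((PiLp.continuous_ofLp 2 _).comp hcb)
  have hF : Continuous fun t => orient (p t) (q t) (a t) := by
    show Continuous fun t => (q t 0 - p t 0) * (a t 1 - p t 1)
      - (q t 1 - p t 1) * (a t 0 - p t 0)
    exact ((cq0.sub cp0).mul (ca1.sub cp1)).sub ((cq1.sub cp1).mul (ca0.sub cp0))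
  have hG : Continuous fun t => orient (p t) (q t) (b t) := by
    show Continuous fun t => (q t 0 - p t 0) * (b t 1 - p t 1)
      - (q t 1 - p t 1) * (b t 0 - p t 0)
    exact ((cq0.sub cp0).mul (cb1.sub cp1)).sub ((cq1.sub cp1).mul (cb0.sub cp0))
  have hdotA : Continuous fun t => (a t 0 - p t 0) * (a t 0 - q t 0)
      + (a t 1 - p t 1) * (a t 1 - q t 1) :=
    ((ca0.sub cp0).mul (ca0.sub cq0)).add ((ca1.sub cp1).mul (ca1.sub cq1))
  have hdotB : Continuous fun t => (b t 0 - p t 0) * (b t 0 - q t 0)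
      + (b t 1 - p t 1) * (b t 1 - q t 1) :=
    ((cb0.sub cp0).mul (cb0.sub cq0)).add ((cb1.sub cp1).mul (cb1.sub cq1))
  have hH : Continuous fun t => St2Aux.dd (p t) (q t) (a t) (b t) := by
    show Continuous fun t => (fun t => orient (p t) (q t) (b t)) t *
        ((fun t => (a t 0 - p t 0) * (a t 0 - q t 0)
          + (a t 1 - p t 1) * (a t 1 - q t 1)) t)
      - (fun t => orient (p t) (q t) (a t)) t *
        ((fun t => (b t 0 - p t 0) * (b t 0 - q t 0)
          + (b t 1 - p t 1) * (b t 1 - q t 1)) t)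
    exact (hG.mul hdotA).sub (hF.mul hdotB)
  -- the auxiliary starting time
  set t' : ℝ := min (t₀ + δ/2) ((t₀ + t₁)/2) with ht'def
  have ht'1 : t₀ < t' := lt_min (by linarith) (by linarith)
  have ht'2 : t' < t₀ + δ := lt_of_le_of_lt (min_le_left _ _) (by linarith)
  have ht'3 : t' < t₁ := lt_of_le_of_lt (min_le_right _ _) (by linarith)
  -- the bad set
  set S : Set ℝ := {t | t ∈ Set.Icc t' t₁ ∧ (orient (p t) (q t) (a t) ≤ 0 ∨
      0 ≤ orient (p t) (q t) (b t) ∨ St2Aux.dd (p t) (q t) (a t) (b t) ≤ 0)} with hSdef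
  have hSclosed : IsClosed S := by
    have hrw : S = Set.Icc t' t₁ ∩ ({t | orient (p t) (q t) (a t) ≤ 0} ∪
        ({t | 0 ≤ orient (p t) (q t) (b t)} ∪
          {t | St2Aux.dd (p t) (q t) (a t) (b t) ≤ 0})) := by
      ext u
      simp only [hSdef, Set.mem_setOf_eq, Set.mem_inter_iff, Set.mem_union]
    rw [hrw]
    exact isClosed_Icc.inter ((isClosed_le hF continuous_const).union
      ((isClosed_le continuous_const hG).union (isClosed_le hH continuous_const)))
  have ht1S : t₁ ∈ S := by
    refine ⟨⟨le_of_lt ht'3, le_refl _⟩, ?_⟩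
    by_contra hcon
    push_neg at hcon
    obtain ⟨h1, h2, h3⟩ := hcon
    obtain ⟨o, ρ, hpo, hqo, hemp⟩ := hdel
    have hρ0 : 0 ≤ ρ := hpo ▸ dist_nonneg
    have hao : ρ ≤ dist (a t₁) o := not_lt.1 (hemp a ha)
    have hbo : ρ ≤ dist (b t₁) o := not_lt.1 (hemp b hb)
    have hao2 : ρ^2 ≤ dist (a t₁) o ^ 2 := by nlinarith
    have hbo2 : ρ^2 ≤ dist (b t₁) o ^ 2 := by nlinarith
    have hk := St2Aux.key (p t₁) (q t₁) (a t₁) (b t₁) o ρ hpo hqo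
    nlinarith [hk, mul_nonneg (le_of_lt h1) (sub_nonneg.2 hbo2),
      mul_nonneg (le_of_lt (neg_pos.2 h2)) (sub_nonneg.2 hao2)]
  have hSbdd : BddBelow S := (bddBelow_Icc (a := t₁) (b := t')).mono fun x hx => hx.1
  set τ : ℝ := sInf S with hτdef
  have hτS : τ ∈ S := hSclosed.csInf_mem ⟨t₁, ht1S⟩ hSbdd
  have hτIcc : τ ∈ Set.Icc t' t₁ := hτS.1
  -- strict signs at t'
  have ht'notS : t' ∉ S := by
    intro hS
    obtain ⟨hl, hr, hic⟩ := hviol t' ⟨ht'1, ht'2⟩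
    have hl' : 0 < orient (p t') (q t') (a t') := hl
    have hr' : orient (p t') (q t') (b t') < 0 := hr
    obtain ⟨o, ρ, h1, h2, h3, h4⟩ := hic
    have hρ0 : 0 ≤ ρ := h1 ▸ dist_nonneg
    have hb2 : dist (b t') o ^ 2 < ρ^2 := by
      nlinarith [dist_nonneg (x := b t') (y := o)]
    have ha2 : dist (a t') o ^ 2 = ρ^2 := by rw [h3]
    have hk := St2Aux.key (p t') (q t') (a t') (b t') o ρ h1 h2
    have hHpos : 0 < St2Aux.dd (p t') (q t') (a t') (b t') := by
      nlinarith [hk, mul_pos hl' (by linarith : (0:ℝ) < ρ^2 - dist (b t') o ^ 2)]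
    rcases hS.2 with h | h | h <;> linarith
  have ht'τ : t' < τ :=
    lt_of_le_of_ne hτIcc.1 (by intro he; exact ht'notS (he ▸ hτS))
  -- strict signs on [t', τ)
  have hpos : ∀ t, t' ≤ t → t < τ → 0 < orient (p t) (q t) (a t) ∧
      orient (p t) (q t) (b t) < 0 ∧ 0 < St2Aux.dd (p t) (q t) (a t) (b t) := by
    intro t h1 h2
    have hnot : t ∉ S := fun hS => absurd (csInf_le hSbdd hS) (not_le.2 h2)
    have hIcc : t ∈ Set.Icc t' t₁ := ⟨h1, le_trans (le_of_lt h2) hτIcc.2⟩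
    have hdisj : ¬(orient (p t) (q t) (a t) ≤ 0 ∨ 0 ≤ orient (p t) (q t) (b t) ∨
        St2Aux.dd (p t) (q t) (a t) (b t) ≤ 0) := fun h => hnot ⟨hIcc, h⟩
    push_neg at hdisj
    exact ⟨hdisj.1, hdisj.2.1, hdisj.2.2⟩
  -- limit signs at τ
  have hFτ : 0 ≤ orient (p τ) (q τ) (a τ) :=
    St2Aux.left_lim hF ht'τ fun t h1 h2 => (hpos t h1 h2).1
  have hGτ : orient (p τ) (q τ) (b τ) ≤ 0 := by
    have h2 : 0 ≤ -orient (p τ) (q τ) (b τ) :=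
      St2Aux.left_lim (F := fun t => -orient (p t) (q t) (b t)) hG.neg ht'τ
        fun t h1 h2 => neg_pos.2 (hpos t h1 h2).2.1
    linarith
  have hHτ : 0 ≤ St2Aux.dd (p τ) (q τ) (a τ) (b τ) :=
    St2Aux.left_lim hH ht'τ fun t h1 h2 => (hpos t h1 h2).2.2
  have hτIoc : τ ∈ Set.Ioc t₀ t₁ := ⟨lt_trans ht'1 ht'τ, hτIcc.2⟩
  have hpqτ : p τ ≠ q τ := hP.never_coincide p hp q hq hpq τ
  have hddτ : St2Aux.dd (p τ) (q τ) (a τ) (b τ) =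
      orient (p τ) (q τ) (b τ) * ((a τ 0 - p τ 0)*(a τ 0 - q τ 0)
        + (a τ 1 - p τ 1)*(a τ 1 - q τ 1))
      - orient (p τ) (q τ) (a τ) * ((b τ 0 - p τ 0)*(b τ 0 - q τ 0)
        + (b τ 1 - p τ 1)*(b τ 1 - q τ 1)) := rfl
  by_cases hF0 : orient (p τ) (q τ) (a τ) = 0
  · -- `a` hits the line through `p`, `q`
    have hG0 : orient (p τ) (q τ) (b τ) ≠ 0 := by
      intro h0
      exact hP.no_four_collin τ p hp q hq a ha b hb ⟨hpq, hpa, hpb, hqa, hqb, hab⟩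
        (St2Aux.collin4 hpqτ hF0 h0)
    have hGlt : orient (p τ) (q τ) (b τ) < 0 := lt_of_le_of_ne hGτ hG0
    have hdotA0 : (a τ 0 - p τ 0)*(a τ 0 - q τ 0)
        + (a τ 1 - p τ 1)*(a τ 1 - q τ 1) ≤ 0 := by
      by_contra hc
      push_neg at hc
      nlinarith [hHτ, hddτ, mul_neg_of_neg_of_pos hGlt hc,
        mul_eq_zero_of_left hF0 ((b τ 0 - p τ 0)*(b τ 0 - q τ 0)
          + (b τ 1 - p τ 1)*(b τ 1 - q τ 1))]
    have hseg : a τ ∈ segment ℝ (p τ) (q τ) := St2Aux.mem_seg hpqτ hF0 hdotA0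
    have hcollin : CollinAt p q a τ := St2Aux.collin3 hpqτ hF0
    obtain ⟨δ', hδ'pos, halt⟩ :=
      hP.line_transversal p hp q hq a ha ⟨hpq, hpa, hqa⟩ τ hcollin
    rcases halt with ⟨h1, h2⟩ | ⟨h1, _⟩
    · exact ⟨τ, hτIoc, Or.inl ⟨hseg, δ', hδ'pos, h1, h2⟩⟩
    · exfalso
      set u : ℝ := max t' (τ - δ'/2) with hudef
      have hu1 : u < τ := max_lt ht'τ (by linarith)
      have hu2 : τ - δ' < u := lt_of_lt_of_le (by linarith) (le_max_right _ _)
      have hr : orient (p u) (q u) (a u) < 0 := h1 u ⟨hu2, hu1⟩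
      have hl := (hpos u (le_max_left _ _) hu1).1
      linarith
  · have hFpos : 0 < orient (p τ) (q τ) (a τ) := lt_of_le_of_ne hFτ (Ne.symm hF0)
    by_cases hG0 : orient (p τ) (q τ) (b τ) = 0
    · -- `b` hits the line through `p`, `q`
      have hdotB0 : (b τ 0 - p τ 0)*(b τ 0 - q τ 0)
          + (b τ 1 - p τ 1)*(b τ 1 - q τ 1) ≤ 0 := by
        by_contra hc
        push_neg at hc
        nlinarith [hHτ, hddτ, mul_pos hFpos hc,
          mul_eq_zero_of_left hG0 ((a τ 0 - p τ 0)*(a τ 0 - q τ 0)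
            + (a τ 1 - p τ 1)*(a τ 1 - q τ 1))]
      have hseg : b τ ∈ segment ℝ (p τ) (q τ) := St2Aux.mem_seg hpqτ hG0 hdotB0
      have hcollin : CollinAt p q b τ := St2Aux.collin3 hpqτ hG0
      obtain ⟨δ', hδ'pos, halt⟩ :=
        hP.line_transversal p hp q hq b hb ⟨hpq, hpb, hqb⟩ τ hcollin
      rcases halt with ⟨h1, _⟩ | ⟨h1, h2⟩
      · exfalso
        set u : ℝ := max t' (τ - δ'/2) with hudef
        have hu1 : u < τ := max_lt ht'τ (by linarith)
        have hu2 : τ - δ' < u := lt_of_lt_of_le (by linarith) (le_max_right _ _)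
        have hl : 0 < orient (p u) (q u) (b u) := h1 u ⟨hu2, hu1⟩
        have hr := (hpos u (le_max_left _ _) hu1).2.1
        linarith
      · exact ⟨τ, hτIoc, Or.inr (Or.inl ⟨hseg, δ', hδ'pos, h1, h2⟩)⟩
    · -- co-circularity
      have hGlt : orient (p τ) (q τ) (b τ) < 0 := lt_of_le_of_ne hGτ hG0
      have hH0 : St2Aux.dd (p τ) (q τ) (a τ) (b τ) = 0 := by
        rcases hτS.2 with h | h | h
        · linarith
        · linarith
        · linarith
      obtain ⟨o, hpo_qo, hao_po⟩ :=
        St2Aux.circumcenter (p τ) (q τ) (a τ) (ne_of_gt hFpos)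
      have hρpos : 0 < dist (p τ) o := by
        rcases (dist_nonneg : (0:ℝ) ≤ dist (p τ) o).lt_or_eq with h | h
        · exact h
        · exfalso
          apply hpqτ
          have hq0 : dist (q τ) o = 0 := by rw [← hpo_qo]; exact h.symm
          rw [dist_eq_zero.1 h.symm, dist_eq_zero.1 hq0]
      have hk := St2Aux.key (p τ) (q τ) (a τ) (b τ) o (dist (p τ) o) rfl hpo_qo.symm
      rw [hao_po] at hk
      have hBz : orient (p τ) (q τ) (a τ) *
          (dist (b τ) o ^ 2 - dist (p τ) o ^ 2) = 0 := by
        linear_combination hk - hH0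
      have hB2 : dist (b τ) o ^ 2 = dist (p τ) o ^ 2 := by
        rcases mul_eq_zero.1 hBz with h | h
        · exact absurd h hF0
        · linarith
      have hbo : dist (b τ) o = dist (p τ) o := by
        have h1 : Real.sqrt (dist (b τ) o ^ 2) = Real.sqrt (dist (p τ) o ^ 2) := by
          rw [hB2]
        rwa [Real.sqrt_sq dist_nonneg, Real.sqrt_sq dist_nonneg] at h1
      refine ⟨τ, hτIoc, Or.inr (Or.inr ⟨⟨o, dist (p τ) o, hρpos, rfl, hpo_qo.symm,
        hao_po, hbo⟩, mul_neg_of_pos_of_neg hFpos hGlt⟩)⟩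
end
end

section
/- Let P be a set of point trajectories satisfying the pseudo-algebraic and general position assumptions, and let (pq, r, I) be a Delaunay crossing for P. Then each of the edges pr and rq is Delaunay with respect to P at every time t ∈ I. -/
/-!
Kinetic Delaunay triangulations of points moving in the plane:
common definitions (trajectories, Delaunay edges, co-circularity and
collinearity events, general position assumptions, Delaunay crossings).
-/

noncomputable section

attribute [local instance] Classical.propDecidable

/-! ### Auxiliary machinery for Statement 3 -/

namespace Statement3Aux

/-- Squared distance in coordinates. -/
def D2 (x y : Plane) : ℝ := (x 0 - y 0)^2 + (x 1 - y 1)^2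

lemma D2_nonneg (x y : Plane) : 0 ≤ D2 x y := by unfold D2; positivity

lemma dist_eq_sqrt_D2 (x y : Plane) : dist x y = Real.sqrt (D2 x y) := by
  rw [EuclideanSpace.dist_eq]
  simp [D2, Fin.sum_univ_two, Real.dist_eq, sq_abs]

lemma dist_sq_eq_D2 (x y : Plane) : dist x y ^ 2 = D2 x y := by
  rw [dist_eq_sqrt_D2, Real.sq_sqrt (D2_nonneg x y)]

lemma dist_eq_iff_D2 {x y : Plane} {ρ : ℝ} (hρ : 0 ≤ ρ) : dist x y = ρ ↔ D2 x y = ρ^2 := by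
  rw [dist_eq_sqrt_D2]
  constructor
  · intro h; rw [← h, Real.sq_sqrt (D2_nonneg x y)]
  · intro h; rw [h, Real.sqrt_sq hρ]

lemma dist_lt_iff_D2 {x y : Plane} {ρ : ℝ} (hρ : 0 ≤ ρ) : dist x y < ρ ↔ D2 x y < ρ^2 := by
  rw [dist_eq_sqrt_D2, show ρ = Real.sqrt (ρ^2) from (Real.sqrt_sq hρ).symm,
    Real.sqrt_lt_sqrt_iff (D2_nonneg x y), Real.sqrt_sq hρ]

lemma dist_le_iff_D2 {x y : Plane} {ρ : ℝ} (hρ : 0 ≤ ρ) : dist x y ≤ ρ ↔ D2 x y ≤ ρ^2 := by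
  constructor
  · intro h
    have := pow_le_pow_left₀ dist_nonneg h 2
    rwa [dist_sq_eq_D2] at this
  · intro h
    have := Real.sqrt_le_sqrt h
    rwa [← dist_eq_sqrt_D2, Real.sqrt_sq hρ] at this

lemma dist_lt_dist_iff_D2 {x y o : Plane} : dist x o < dist y o ↔ D2 x o < D2 y o := by
  rw [dist_eq_sqrt_D2, dist_eq_sqrt_D2]
  exact Real.sqrt_lt_sqrt_iff (D2_nonneg x o)

lemma D2_pos_of_ne {x y : Plane} (h : x ≠ y) : 0 < D2 x y := by
  rcases lt_or_eq_of_le (D2_nonneg x y) with h' | h'; · exact h'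
  exfalso; apply h
  have h0 : (x 0 - y 0)^2 + (x 1 - y 1)^2 = 0 := by have := h'.symm; simpa [D2] using this
  have h1 : x 0 = y 0 := by nlinarith [sq_nonneg (x 0 - y 0), sq_nonneg (x 1 - y 1)]
  have h2 : x 1 = y 1 := by nlinarith [sq_nonneg (x 0 - y 0), sq_nonneg (x 1 - y 1)]
  ext i; fin_cases i <;> assumption

lemma coord_abs_le_norm (x : Plane) (i : Fin 2) : |x i| ≤ ‖x‖ := by
  have h : ‖x‖ = Real.sqrt ((x 0)^2 + (x 1)^2) := by
    rw [EuclideanSpace.norm_eq]; simp [Fin.sum_univ_two, sq_abs]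
  rw [h, show |x i| = Real.sqrt ((x i)^2) by rw [Real.sqrt_sq_eq_abs]]
  apply Real.sqrt_le_sqrt
  fin_cases i <;> simp <;> nlinarith [sq_nonneg (x 0), sq_nonneg (x 1)]

lemma norm_le_coords (x : Plane) : ‖x‖ ≤ |x 0| + |x 1| := by
  have h : ‖x‖ = Real.sqrt ((x 0)^2 + (x 1)^2) := by
    rw [EuclideanSpace.norm_eq]; simp [Fin.sum_univ_two, sq_abs]
  rw [h, show |x 0| + |x 1| = Real.sqrt ((|x 0| + |x 1|)^2) by
    rw [Real.sqrt_sq (by positivity)]]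
  apply Real.sqrt_le_sqrt
  nlinarith [abs_nonneg (x 0), abs_nonneg (x 1), sq_abs (x 0), sq_abs (x 1)]

set_option maxHeartbeats 1000000 in
/-- The tangent-disc construction: given a disc with `a` on its boundary and `b`
inside it, there is a disc through `a` and `b` whose interior is contained in the
interior of the original disc and avoids `b`. -/
lemma tangent_disc (a b o : Plane) (ρ : ℝ) (hab : a ≠ b)
    (ha : dist a o = ρ) (hb : dist b o ≤ ρ) :
    ∃ o' ρ', dist a o' = ρ' ∧ dist b o' = ρ' ∧
      ∀ x : Plane, dist x o' < ρ' → (dist x o < ρ ∧ x ≠ b) := by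
  have hρ0 : 0 ≤ ρ := ha ▸ dist_nonneg
  have hρpos : 0 < ρ := by
    rcases lt_or_eq_of_le hρ0 with h | h; · exact h
    exfalso
    rw [← h] at ha hb
    have h1 : a = o := dist_eq_zero.mp ha
    have h2 : b = o := dist_eq_zero.mp (le_antisymm hb dist_nonneg)
    exact hab (h1.trans h2.symm)
  have hW : 0 < D2 a b := D2_pos_of_ne hab
  set ip : ℝ := (b 0 - a 0) * (o 0 - a 0) + (b 1 - a 1) * (o 1 - a 1) with hip
  have hDa : D2 a o = ρ^2 := (dist_eq_iff_D2 hρ0).mp ha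
  have hDb : D2 b o ≤ ρ^2 := (dist_le_iff_D2 hρ0).mp hb
  have hkey : D2 a b ≤ 2 * ip := by
    have : D2 b o - D2 a o = D2 a b - 2 * ip := by unfold D2; rw [hip]; ring
    nlinarith
  have hip0 : 0 < ip := by nlinarith
  set s : ℝ := D2 a b / (2 * ip) with hs
  have hs0 : 0 < s := by positivity
  have hs1 : s ≤ 1 := by rw [hs]; rw [div_le_one (by positivity)]; linarith
  set o' : Plane := !₂[a 0 + s * (o 0 - a 0), a 1 + s * (o 1 - a 1)] with ho'
  have ho'0 : o' 0 = a 0 + s * (o 0 - a 0) := rfl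
  have ho'1 : o' 1 = a 1 + s * (o 1 - a 1) := rfl
  set ρ' : ℝ := s * ρ with hρ'
  have hρ'0 : 0 ≤ ρ' := by positivity
  have hsip : s * (2 * ip) = D2 a b := by rw [hs]; field_simp
  have hb' : dist b o' = ρ' := by
    rw [dist_eq_iff_D2 hρ'0]
    have h1 : D2 b o' = D2 a b - 2*s*ip + s^2 * D2 a o := by
      unfold D2; rw [ho'0, ho'1, hip]; ring
    rw [h1, hDa, hρ']; nlinarith
  have ha' : dist a o' = ρ' := by
    rw [dist_eq_iff_D2 hρ'0]
    have h1 : D2 a o' = s^2 * D2 a o := by unfold D2; rw [ho'0, ho'1]; ring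
    rw [h1, hDa, hρ']; ring
  have hdo : dist o' o = ρ - ρ' := by
    rw [dist_eq_iff_D2 (by nlinarith)]
    have h1 : D2 o' o = (1-s)^2 * D2 a o := by unfold D2; rw [ho'0, ho'1]; ring
    rw [h1, hDa, hρ']; ring
  refine ⟨o', ρ', ha', hb', ?_⟩
  intro x hx
  constructor
  · calc dist x o ≤ dist x o' + dist o' o := dist_triangle _ _ _
      _ < ρ' + (ρ - ρ') := by rw [hdo]; linarith
      _ = ρ := by ring
  · intro h
    rw [h] at hx
    exact absurd hb' (ne_of_lt hx)

/-- Center of a disc through `p`, `q`, at parameter `h` along the bisector. -/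
def ctr (p q : Plane) (h : ℝ) : Plane :=
  !₂[(p 0 + q 0)/2 - h * (q 1 - p 1), (p 1 + q 1)/2 + h * (q 0 - p 0)]

lemma ctr_0 (p q : Plane) (h : ℝ) : ctr p q h 0 = (p 0 + q 0)/2 - h * (q 1 - p 1) := rfl
lemma ctr_1 (p q : Plane) (h : ℝ) : ctr p q h 1 = (p 1 + q 1)/2 + h * (q 0 - p 0) := rfl

/-- `|x - m|² - |p - m|²` where `m` is the midpoint of `pq`. -/
def aC (p q x : Plane) : ℝ :=
  (x 0 - (p 0 + q 0)/2)^2 + (x 1 - (p 1 + q 1)/2)^2 - ((q 0 - p 0)^2 + (q 1 - p 1)^2)/4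
/-- Cross product of `q - p` with `x - m`. -/
def dC (p q x : Plane) : ℝ :=
  (q 0 - p 0) * (x 1 - (p 1 + q 1)/2) - (q 1 - p 1) * (x 0 - (p 0 + q 0)/2)

lemma F_eq (p q x : Plane) (h : ℝ) :
    D2 x (ctr p q h) - D2 p (ctr p q h) = aC p q x - 2 * h * dC p q x := by
  unfold D2 aC dC; rw [ctr_0, ctr_1]; ring

lemma D2_p_ctr (p q : Plane) (h : ℝ) :
    D2 p (ctr p q h) = D2 p q / 4 + h^2 * D2 p q := by
  unfold D2; rw [ctr_0, ctr_1]; ring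

lemma D2_q_ctr (p q : Plane) (h : ℝ) :
    D2 q (ctr p q h) = D2 p q / 4 + h^2 * D2 p q := by
  unfold D2; rw [ctr_0, ctr_1]; ring

lemma aC_pp (p q : Plane) : aC p q p = 0 := by unfold aC; ring
lemma aC_qq (p q : Plane) : aC p q q = 0 := by unfold aC; ring

/-- Any point equidistant from `p ≠ q` lies on the bisector line. -/
lemma exists_ctr {p q o : Plane} (hne : p ≠ q) (he : D2 p o = D2 q o) :
    ∃ h : ℝ, o = ctr p q h := by
  have hL : 0 < D2 p q := D2_pos_of_ne hne
  have hne' : (q 0 - p 0)^2 + (q 1 - p 1)^2 ≠ 0 := by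
    have h9 : D2 p q = (q 0 - p 0)^2 + (q 1 - p 1)^2 := by unfold D2; ring
    rw [h9] at hL; exact ne_of_gt hL
  have orth : (q 0 - p 0) * (o 0 - (p 0 + q 0)/2) + (q 1 - p 1) * (o 1 - (p 1 + q 1)/2) = 0 := by
    have h2 : D2 p o - D2 q o
        = 2 * ((q 0 - p 0) * (o 0 - (p 0 + q 0)/2) + (q 1 - p 1) * (o 1 - (p 1 + q 1)/2)) := by
      unfold D2; ring
    rw [he] at h2; linarith
  refine ⟨((q 0 - p 0) * (o 1 - (p 1 + q 1)/2) - (q 1 - p 1) * (o 0 - (p 0 + q 0)/2))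
      / ((q 0 - p 0)^2 + (q 1 - p 1)^2), ?_⟩
  ext i; fin_cases i
  · show o 0 = ctr p q _ 0
    rw [ctr_0]
    field_simp
    linear_combination (2 * (q 0 - p 0)) * orth
  · show o 1 = ctr p q _ 1
    rw [ctr_1]
    field_simp
    linear_combination (2 * (q 1 - p 1)) * orth

/-- A point on the line `pq`, at distance at most `|pq|/2` from the midpoint,
lies on the segment `pq`. -/
lemma seg_of {p q x : Plane} (hne : p ≠ q) (ha : aC p q x ≤ 0) (hd : dC p q x = 0) :
    x ∈ segment ℝ p q := by
  unfold dC at hd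
  have hL : 0 < D2 p q := D2_pos_of_ne hne
  rw [D2] at hL
  have hne' : (q 0 - p 0)^2 + (q 1 - p 1)^2 ≠ 0 := ne_of_gt (by nlinarith)
  set c : ℝ := ((q 0 - p 0) * (x 0 - (p 0 + q 0)/2) + (q 1 - p 1) * (x 1 - (p 1 + q 1)/2))
      / ((q 0 - p 0)^2 + (q 1 - p 1)^2) with hc
  have hx0 : x 0 - (p 0 + q 0)/2 = c * (q 0 - p 0) := by
    rw [hc, div_mul_eq_mul_div, eq_div_iff hne']; linear_combination (-(q 1 - p 1)) * hd
  have hx1 : x 1 - (p 1 + q 1)/2 = c * (q 1 - p 1) := by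
    rw [hc, div_mul_eq_mul_div, eq_div_iff hne']; linear_combination (q 0 - p 0) * hd
  have haC : aC p q x = c^2 * ((q 0 - p 0)^2 + (q 1 - p 1)^2)
      - ((q 0 - p 0)^2 + (q 1 - p 1)^2)/4 := by
    unfold aC; rw [← sub_eq_zero]
    linear_combination (x 0 - (p 0 + q 0)/2 + c * (q 0 - p 0)) * hx0
      + (x 1 - (p 1 + q 1)/2 + c * (q 1 - p 1)) * hx1
  have hc2 : c^2 ≤ 1/4 := by nlinarith
  have hc1 : -(1/2) ≤ c := by nlinarith
  have hc3 : c ≤ 1/2 := by nlinarith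
  refine ⟨1/2 - c, 1/2 + c, by linarith, by linarith, by ring, ?_⟩
  ext i; fin_cases i
  · show (1/2 - c) * p 0 + (1/2 + c) * q 0 = x 0
    linear_combination -hx0
  · show (1/2 - c) * p 1 + (1/2 + c) * q 1 = x 1
    linear_combination -hx1

/-- Strict convexity: an interior point of a chord is strictly inside the disc. -/
lemma inside_of_seg {p q x o : Plane} {ρ : ℝ} (hx : x ∈ segment ℝ p q)
    (hxp : x ≠ p) (hxq : x ≠ q) (hp : dist p o = ρ) (hq : dist q o = ρ) :
    dist x o < ρ := by
  obtain ⟨α, β, hα, hβ, hαβ, heq⟩ := hx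
  have hpq : p ≠ q := by
    rintro rfl
    apply hxp
    rw [← heq, ← add_smul, hαβ, one_smul]
  have hα' : 0 < α := by
    rcases lt_or_eq_of_le hα with h | h; · exact h
    exfalso; apply hxq
    have hb1 : β = 1 := by rw [← h, zero_add] at hαβ; exact hαβ
    rw [← heq, ← h, zero_smul, zero_add, hb1, one_smul]
  have hβ' : 0 < β := by
    rcases lt_or_eq_of_le hβ with h | h; · exact h
    exfalso; apply hxp
    have ha1 : α = 1 := by rw [← h, add_zero] at hαβ; exact hαβ
    rw [← heq, ← h, zero_smul, add_zero, ha1, one_smul]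
  have h1 : ‖p - o‖ ≤ ρ := by rw [← dist_eq_norm, hp]
  have h2 : ‖q - o‖ ≤ ρ := by rw [← dist_eq_norm, hq]
  have hne : p - o ≠ q - o := fun h => hpq (by
    have := congrArg (· + o) h; simpa using this)
  have hlt := norm_combo_lt_of_ne h1 h2 hne hα' hβ' hαβ
  rw [dist_eq_norm]
  calc ‖x - o‖ = ‖α • (p - o) + β • (q - o)‖ := by
        rw [← heq, smul_sub, smul_sub]
        congr 1
        rw [show α•p - α•o + (β•q - β•o) = α•p + β•q - (α•o + β•o) by abel,
          ← add_smul, hαβ, one_smul]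
    _ < ρ := hlt

/-- The key auxiliary notion: a disc through `p` and `q`, containing `r` (not
necessarily strictly), and containing no point of `P \ {r}` in its interior. -/
def Wit (P : Finset Traj) (p q r : Traj) (t : ℝ) : Prop :=
  ∃ o ρ, dist (p t) o = ρ ∧ dist (q t) o = ρ ∧ dist (r t) o ≤ ρ ∧
    ∀ x ∈ P.erase r, ¬ dist (x t) o < ρ

lemma wit_interior {P : Finset Traj} {p q r : Traj} {t : ℝ}
    (hd : DelaunayEdge (P.erase r) p q t) (hnd : ¬ DelaunayEdge P p q t) :
    Wit P p q r t := by
  obtain ⟨o, ρ, h1, h2, h3⟩ := hd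
  by_cases hle : dist (r t) o < ρ
  · exact ⟨o, ρ, h1, h2, le_of_lt hle, h3⟩
  · exfalso
    apply hnd
    refine ⟨o, ρ, h1, h2, fun x hx => ?_⟩
    by_cases hxr : x = r
    · subst hxr; exact hle
    · exact h3 x (Finset.mem_erase.mpr ⟨hxr, hx⟩)

lemma wit_to_delaunay {P : Finset Traj} {p q r : Traj} {t : ℝ}
    (hw : Wit P p q r t) (hpr : p t ≠ r t) (hqr : q t ≠ r t) :
    DelaunayEdge P p r t ∧ DelaunayEdge P r q t := by
  obtain ⟨o, ρ, h1, h2, h3, h4⟩ := hw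
  constructor
  · obtain ⟨o', ρ', ha', hb', hx'⟩ := tangent_disc (p t) (r t) o ρ hpr h1 h3
    refine ⟨o', ρ', ha', hb', fun x hx hlt => ?_⟩
    obtain ⟨hlt2, hne⟩ := hx' (x t) hlt
    have hxr : x ≠ r := fun h => hne (by rw [h])
    exact h4 x (Finset.mem_erase.mpr ⟨hxr, hx⟩) hlt2
  · obtain ⟨o', ρ', ha', hb', hx'⟩ := tangent_disc (q t) (r t) o ρ hqr h2 h3
    refine ⟨o', ρ', hb', ha', fun x hx hlt => ?_⟩
    obtain ⟨hlt2, hne⟩ := hx' (x t) hlt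
    have hxr : x ≠ r := fun h => hne (by rw [h])
    exact h4 x (Finset.mem_erase.mpr ⟨hxr, hx⟩) hlt2

/-- From an arbitrary witness at time `u`, produce one whose bisector parameter is
bounded by `K`, assuming the `K`-guard holds at `u`. -/
lemma shrink_h (P : Finset Traj) (p q r : Traj) (u : ℝ) (hpq : p u ≠ q u) {K : ℝ} (hK : 0 < K)
    (hW : Wit P p q r u) (hND : ¬ DelaunayEdge P p q u)
    (hguard : ∀ x ∈ P.erase r,
      ¬ (aC (p u) (q u) (x u) < 0 ∧ 2*K*|dC (p u) (q u) (x u)| ≤ -(aC (p u) (q u) (x u)))) :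
    ∃ h' : ℝ, |h'| ≤ K ∧
      dist (p u) (ctr (p u) (q u) h') = dist (q u) (ctr (p u) (q u) h') ∧
      dist (r u) (ctr (p u) (q u) h') ≤ dist (p u) (ctr (p u) (q u) h') ∧
      ∀ x ∈ P.erase r, ¬ dist (x u) (ctr (p u) (q u) h') < dist (p u) (ctr (p u) (q u) h') := by
  have eq_pq : ∀ h' : ℝ,
      dist (p u) (ctr (p u) (q u) h') = dist (q u) (ctr (p u) (q u) h') := by
    intro h'
    rw [dist_eq_sqrt_D2, dist_eq_sqrt_D2, D2_p_ctr, D2_q_ctr]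
  have rhalf : ∀ h' : ℝ,
      (∀ x ∈ P.erase r, ¬ dist (x u) (ctr (p u) (q u) h') < dist (p u) (ctr (p u) (q u) h')) →
      dist (r u) (ctr (p u) (q u) h') ≤ dist (p u) (ctr (p u) (q u) h') := by
    intro h' hemp
    by_contra hgt
    push_neg at hgt
    apply hND
    refine ⟨ctr (p u) (q u) h', dist (p u) (ctr (p u) (q u) h'), rfl, (eq_pq h').symm,
      fun x hx => ?_⟩
    by_cases hxr : x = r
    · subst hxr; exact not_lt.mpr (le_of_lt hgt)
    · exact hemp x (Finset.mem_erase.mpr ⟨hxr, hx⟩)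
  obtain ⟨o, ρ, h1, h2, h3, h4⟩ := hW
  have hD2 : D2 (p u) o = D2 (q u) o := by
    rw [← dist_sq_eq_D2, ← dist_sq_eq_D2, h1, h2]
  obtain ⟨h0, rfl⟩ := exists_ctr hpq hD2
  have hρeq : ρ = dist (p u) (ctr (p u) (q u) h0) := h1.symm
  subst hρeq
  by_cases hbig : |h0| ≤ K
  · exact ⟨h0, hbig, eq_pq h0, h3, h4⟩
  push_neg at hbig
  have hF0 : ∀ x ∈ P.erase r,
      0 ≤ aC (p u) (q u) (x u) - 2 * h0 * dC (p u) (q u) (x u) := by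
    intro x hx
    rw [← F_eq]
    have := h4 x hx
    rw [not_lt] at this
    have h9 : D2 (p u) (ctr (p u) (q u) h0) ≤ D2 (x u) (ctr (p u) (q u) h0) := by
      rw [← dist_sq_eq_D2, ← dist_sq_eq_D2]
      exact pow_le_pow_left₀ dist_nonneg this 2
    linarith
  rcases le_or_gt h0 0 with hsgn | hsgn
  · -- h0 < -K : use h' = -K
    have hh0 : h0 < -K := by
      rcases abs_cases h0 with ⟨he, _⟩ | ⟨he, _⟩ <;> linarith
    refine ⟨-K, by rw [abs_neg, abs_of_pos hK], eq_pq _, ?emp1, ?emp2⟩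
    case emp2 =>
      intro x hx hlt
      have hFK : aC (p u) (q u) (x u) - 2 * (-K) * dC (p u) (q u) (x u) < 0 := by
        rw [← F_eq]
        have := dist_lt_dist_iff_D2.mp hlt
        linarith
      have hF0x := hF0 x hx
      have hdpos : 0 < dC (p u) (q u) (x u) := by nlinarith
      exact hguard x hx ⟨by nlinarith, by rw [abs_of_pos hdpos]; nlinarith⟩
    case emp1 =>
      apply rhalf
      intro x hx hlt
      have hFK : aC (p u) (q u) (x u) - 2 * (-K) * dC (p u) (q u) (x u) < 0 := by
        rw [← F_eq]
        have := dist_lt_dist_iff_D2.mp hlt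
        linarith
      have hF0x := hF0 x hx
      have hdpos : 0 < dC (p u) (q u) (x u) := by nlinarith
      exact hguard x hx ⟨by nlinarith, by rw [abs_of_pos hdpos]; nlinarith⟩
  · -- h0 > K : use h' = K
    have hh0 : K < h0 := by
      rcases abs_cases h0 with ⟨he, _⟩ | ⟨he, _⟩ <;> linarith
    refine ⟨K, by rw [abs_of_pos hK], eq_pq _, ?emp3, ?emp4⟩
    case emp4 =>
      intro x hx hlt
      have hFK : aC (p u) (q u) (x u) - 2 * K * dC (p u) (q u) (x u) < 0 := by
        rw [← F_eq]
        have := dist_lt_dist_iff_D2.mp hlt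
        linarith
      have hF0x := hF0 x hx
      have hdneg : dC (p u) (q u) (x u) < 0 := by nlinarith
      exact hguard x hx ⟨by nlinarith, by rw [abs_of_neg hdneg]; nlinarith⟩
    case emp3 =>
      apply rhalf
      intro x hx hlt
      have hFK : aC (p u) (q u) (x u) - 2 * K * dC (p u) (q u) (x u) < 0 := by
        rw [← F_eq]
        have := dist_lt_dist_iff_D2.mp hlt
        linarith
      have hF0x := hF0 x hx
      have hdneg : dC (p u) (q u) (x u) < 0 := by nlinarith
      exact hguard x hx ⟨by nlinarith, by rw [abs_of_neg hdneg]; nlinarith⟩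

end Statement3Aux

namespace Statement3Aux

lemma cont_coord {f : Traj} (hf : Continuous f) (i : Fin 2) : Continuous fun u => f u i :=
  (EuclideanSpace.proj i).continuous.comp hf

/-- The "guard" predicate: ruled out near a good time. -/
@[reducible] def Bad (p q x : Traj) (K u : ℝ) : Prop :=
  aC (p u) (q u) (x u) < 0 ∧ 2*K*|dC (p u) (q u) (x u)| ≤ -(aC (p u) (q u) (x u))

set_option maxHeartbeats 1000000 in
lemma eventual_guard (P : Finset Traj) (p q r : Traj)
    (hcont : ∀ x ∈ P, Continuous x) (hp : p ∈ P) (hq : q ∈ P)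
    (hpqv : ∀ t, p t ≠ q t) (τ : ℝ)
    (hseg : ∀ x ∈ P, x ≠ p → x ≠ q → x ≠ r → x τ ∉ segment ℝ (p τ) (q τ)) :
    ∃ K : ℝ, 0 < K ∧ ∀ᶠ u in nhds τ, ∀ x ∈ P.erase r, ¬ Bad p q x K u := by
  classical
  have hpc : Continuous p := hcont p hp
  have hqc : Continuous q := hcont q hq
  have hAc : ∀ x : Traj, Continuous x → Continuous (fun u => aC (p u) (q u) (x u)) := by
    intro x hx
    have hh : (fun u => aC (p u) (q u) (x u))
        = fun u => (x u 0 - (p u 0 + q u 0)/2)^2 + (x u 1 - (p u 1 + q u 1)/2)^2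
        - ((q u 0 - p u 0)^2 + (q u 1 - p u 1)^2)/4 := rfl
    rw [hh]
    have c1 := cont_coord hpc 0; have c2 := cont_coord hpc 1
    have c3 := cont_coord hqc 0; have c4 := cont_coord hqc 1
    have c5 := cont_coord hx 0; have c6 := cont_coord hx 1
    exact (((c5.sub ((c1.add c3).div_const 2)).pow 2).add
        ((c6.sub ((c2.add c4).div_const 2)).pow 2)).sub
      ((((c3.sub c1).pow 2).add ((c4.sub c2).pow 2)).div_const 4)
  have hDc : ∀ x : Traj, Continuous x → Continuous (fun u => dC (p u) (q u) (x u)) := by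
    intro x hx
    have hh : (fun u => dC (p u) (q u) (x u))
        = fun u => (q u 0 - p u 0) * (x u 1 - (p u 1 + q u 1)/2)
        - (q u 1 - p u 1) * (x u 0 - (p u 0 + q u 0)/2) := rfl
    rw [hh]
    have c1 := cont_coord hpc 0; have c2 := cont_coord hpc 1
    have c3 := cont_coord hqc 0; have c4 := cont_coord hqc 1
    have c5 := cont_coord hx 0; have c6 := cont_coord hx 1
    exact ((c3.sub c1).mul (c6.sub ((c2.add c4).div_const 2))).sub
      ((c4.sub c2).mul (c5.sub ((c1.add c3).div_const 2)))
  have key : ∀ x ∈ P.erase r, ∃ K : ℝ, 0 < K ∧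
      ∀ᶠ u in nhds τ, ¬ Bad p q x K u := by
    intro x hx
    obtain ⟨hxr, hxP⟩ := Finset.mem_erase.mp hx
    by_cases hxp : x = p
    · refine ⟨1, one_pos, Filter.Eventually.of_forall fun u => ?_⟩
      rintro ⟨h1, -⟩
      rw [hxp] at h1
      rw [aC_pp (p u) (q u)] at h1; exact lt_irrefl 0 h1
    by_cases hxq : x = q
    · refine ⟨1, one_pos, Filter.Eventually.of_forall fun u => ?_⟩
      rintro ⟨h1, -⟩
      rw [hxq] at h1
      rw [aC_qq (p u) (q u)] at h1; exact lt_irrefl 0 h1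
    have hxc : Continuous x := hcont x hxP
    have hgood : 0 < aC (p τ) (q τ) (x τ) ∨ dC (p τ) (q τ) (x τ) ≠ 0 := by
      by_contra hcon
      push_neg at hcon
      obtain ⟨h1, h2⟩ := hcon
      exact hseg x hxP hxp hxq hxr (seg_of (hpqv τ) h1 h2)
    rcases hgood with hgA | hgD
    · refine ⟨1, one_pos, ?_⟩
      have hev : ∀ᶠ u in nhds τ, 0 < aC (p u) (q u) (x u) :=
        ((hAc x hxc).tendsto τ).eventually (eventually_gt_nhds hgA)
      exact hev.mono fun u hu => by rintro ⟨h1, -⟩; linarith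
    · have habs : 0 < |dC (p τ) (q τ) (x τ)| := abs_pos.mpr hgD
      set cst : ℝ := |dC (p τ) (q τ) (x τ)|/2 with hcst
      set C : ℝ := |aC (p τ) (q τ) (x τ)| + 1 with hC
      have hcst0 : 0 < cst := by rw [hcst]; positivity
      have hC0 : 0 < C := by rw [hC]; positivity
      refine ⟨C/(2*cst) + 1, by positivity, ?_⟩
      have h1 : ∀ᶠ u in nhds τ, cst < |dC (p u) (q u) (x u)| :=
        (((hDc x hxc).abs).tendsto τ).eventually (eventually_gt_nhds (by rw [hcst]; linarith))
      have h2 : ∀ᶠ u in nhds τ, |aC (p u) (q u) (x u)| < C :=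
        (((hAc x hxc).abs).tendsto τ).eventually (eventually_lt_nhds (by rw [hC]; linarith))
      filter_upwards [h1, h2] with u hu1 hu2
      rintro ⟨hA0, hle⟩
      have hAbd : -(aC (p u) (q u) (x u)) < C := lt_of_le_of_lt (neg_le_abs _) hu2
      have hKd : C < 2*(C/(2*cst) + 1)*|dC (p u) (q u) (x u)| := by
        have hfac : 0 < C/(2*cst) + 1 := by positivity
        have hgeq : 2*(C/(2*cst) + 1)*cst ≤ 2*(C/(2*cst) + 1)*|dC (p u) (q u) (x u)| := by
          nlinarith [le_of_lt hu1]
        have hval : 2*(C/(2*cst) + 1)*cst = C + 2*cst := by field_simp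
        nlinarith
      linarith
  choose! K hK0 hKev using key
  refine ⟨1 + ∑ x ∈ P.erase r, |K x|, ?_, ?_⟩
  · have : (0:ℝ) ≤ ∑ x ∈ P.erase r, |K x| := Finset.sum_nonneg fun x _ => abs_nonneg _
    linarith
  refine (Finset.eventually_all _).mpr fun x hx => ?_
  refine (hKev x hx).mono fun u hu => ?_
  rintro ⟨h1, h2⟩
  apply hu
  refine ⟨h1, ?_⟩
  have hge : K x ≤ 1 + ∑ y ∈ P.erase r, |K y| := by
    have h3 : |K x| ≤ ∑ y ∈ P.erase r, |K y| :=
      Finset.single_le_sum (f := fun y => |K y|) (fun _ _ => abs_nonneg _) hx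
    have h4 : K x ≤ |K x| := le_abs_self _
    linarith
  have h5 : 0 ≤ (1 + ∑ y ∈ P.erase r, |K y|) - K x := by linarith
  nlinarith [abs_nonneg (dC (p u) (q u) (x u)), mul_nonneg h5 (abs_nonneg (dC (p u) (q u) (x u)))]

/-- The compact search space for witnesses. -/
def SSet (P : Finset Traj) (p q r : Traj) (a' b' Rn M : ℝ) : Set (ℝ × Plane × ℝ) :=
  {z | z.1 ∈ Set.Icc a' b' ∧ z.2.1 ∈ Metric.closedBall (0 : Plane) Rn ∧
    z.2.2 ∈ Set.Icc 0 M ∧ dist (p z.1) z.2.1 = z.2.2 ∧ dist (q z.1) z.2.1 = z.2.2 ∧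
    dist (r z.1) z.2.1 ≤ z.2.2 ∧ ∀ x ∈ P.erase r, z.2.2 ≤ dist (x z.1) z.2.1}

set_option maxHeartbeats 1000000 in
lemma SSet_compact (P : Finset Traj) (p q r : Traj)
    (hcont : ∀ x ∈ P, Continuous x) (hp : p ∈ P) (hq : q ∈ P) (hr : r ∈ P)
    (a' b' Rn M : ℝ) : IsCompact (SSet P p q r a' b' Rn M) := by
  have hpc : Continuous p := hcont p hp
  have hqc : Continuous q := hcont q hq
  have hc_o : Continuous fun z : ℝ × Plane × ℝ => z.2.1 := continuous_fst.comp continuous_snd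
  have hc_ρ : Continuous fun z : ℝ × Plane × ℝ => z.2.2 := continuous_snd.comp continuous_snd
  have hSclosed : IsClosed (SSet P p q r a' b' Rn M) := by
    unfold SSet
    simp only [Set.setOf_and]
    refine IsClosed.inter ((isClosed_Icc).preimage continuous_fst) ?_
    refine IsClosed.inter (Metric.isClosed_closedBall.preimage hc_o) ?_
    refine IsClosed.inter ((isClosed_Icc).preimage hc_ρ) ?_
    refine IsClosed.inter (isClosed_eq (((hpc.comp continuous_fst).dist hc_o)) hc_ρ) ?_
    refine IsClosed.inter (isClosed_eq (((hqc.comp continuous_fst).dist hc_o)) hc_ρ) ?_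
    refine IsClosed.inter (isClosed_le (((hcont r hr).comp continuous_fst).dist hc_o) hc_ρ) ?_
    have hclosed2 : IsClosed (⋂ x ∈ P.erase r,
        {z : ℝ × Plane × ℝ | z.2.2 ≤ dist (x z.1) z.2.1}) :=
      isClosed_biInter fun x hx => isClosed_le hc_ρ
        (((hcont x (Finset.mem_of_mem_erase hx)).comp continuous_fst).dist hc_o)
    convert hclosed2 using 1
    ext z
    simp only [Set.mem_iInter, Set.mem_setOf_eq]
  refine IsCompact.of_isClosed_subset
    (((isCompact_Icc : IsCompact (Set.Icc a' b'))).prod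
      ((isCompact_closedBall (0 : Plane) Rn).prod (isCompact_Icc : IsCompact (Set.Icc 0 M))))
    hSclosed ?_
  intro z hz
  exact Set.mk_mem_prod hz.1 (Set.mk_mem_prod hz.2.1 hz.2.2.1)

set_option maxHeartbeats 1000000 in
/-- A bounded witness at a single time `u`. -/
lemma bounded_witness (P : Finset Traj) (p q r : Traj) (u : ℝ) (hpq : p u ≠ q u)
    {K : ℝ} (hK : 0 < K)
    (hW : Wit P p q r u) (hND : ¬ DelaunayEdge P p q u)
    (hgu : ∀ x ∈ P.erase r, ¬ Bad p q x K u)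
    {Rp Rq : ℝ} (hpu : ‖p u‖ ≤ Rp) (hqu : ‖q u‖ ≤ Rq) :
    ∃ o : Plane, ∃ ρ : ℝ,
      ‖o‖ ≤ ((Rp + Rq)/2 + K*(Rp + Rq)) + ((Rp + Rq)/2 + K*(Rp + Rq)) ∧
      0 ≤ ρ ∧ ρ ≤ Rp + (((Rp + Rq)/2 + K*(Rp + Rq)) + ((Rp + Rq)/2 + K*(Rp + Rq))) ∧
      dist (p u) o = ρ ∧ dist (q u) o = ρ ∧ dist (r u) o ≤ ρ ∧
      ∀ x ∈ P.erase r, ρ ≤ dist (x u) o := by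
  obtain ⟨h', hh'K, heq, hrle, hemp⟩ := shrink_h P p q r u hpq hK hW hND hgu
  set R1 : ℝ := (Rp + Rq)/2 + K*(Rp + Rq) with hR1
  set o' : Plane := ctr (p u) (q u) h' with ho'
  set ρ' : ℝ := dist (p u) o' with hρ'
  have e0 : |p u 0| ≤ Rp := (coord_abs_le_norm (p u) 0).trans hpu
  have e1 : |p u 1| ≤ Rp := (coord_abs_le_norm (p u) 1).trans hpu
  have f0 : |q u 0| ≤ Rq := (coord_abs_le_norm (q u) 0).trans hqu
  have f1 : |q u 1| ≤ Rq := (coord_abs_le_norm (q u) 1).trans hqu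
  have habs0 : |o' 0| ≤ R1 := by
    rw [ho', ctr_0]
    have t1 : |(p u 0 + q u 0)/2 - h' * (q u 1 - p u 1)|
        ≤ |(p u 0 + q u 0)/2| + |h' * (q u 1 - p u 1)| := abs_sub _ _
    have t2 : |(p u 0 + q u 0)/2| ≤ (Rp + Rq)/2 := by
      rw [abs_div, abs_of_pos (by norm_num : (0:ℝ) < 2)]
      have hnum : |p u 0 + q u 0| ≤ Rp + Rq :=
        (abs_add_le (p u 0) (q u 0)).trans (add_le_add e0 f0)
      linarith
    have t3 : |h' * (q u 1 - p u 1)| ≤ K * (Rp + Rq) := by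
      rw [abs_mul]
      have hq1 : |q u 1 - p u 1| ≤ Rq + Rp := (abs_sub _ _).trans (add_le_add f1 e1)
      nlinarith [abs_nonneg h', abs_nonneg (q u 1 - p u 1)]
    rw [hR1]; linarith
  have habs1 : |o' 1| ≤ R1 := by
    rw [ho', ctr_1]
    have t1 : |(p u 1 + q u 1)/2 + h' * (q u 0 - p u 0)|
        ≤ |(p u 1 + q u 1)/2| + |h' * (q u 0 - p u 0)| := abs_add_le _ _
    have t2 : |(p u 1 + q u 1)/2| ≤ (Rp + Rq)/2 := by
      rw [abs_div, abs_of_pos (by norm_num : (0:ℝ) < 2)]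
      have hnum : |p u 1 + q u 1| ≤ Rp + Rq :=
        (abs_add_le (p u 1) (q u 1)).trans (add_le_add e1 f1)
      linarith
    have t3 : |h' * (q u 0 - p u 0)| ≤ K * (Rp + Rq) := by
      rw [abs_mul]
      have hq1 : |q u 0 - p u 0| ≤ Rq + Rp := (abs_sub _ _).trans (add_le_add f0 e0)
      nlinarith [abs_nonneg h', abs_nonneg (q u 0 - p u 0)]
    rw [hR1]; linarith
  have hoB : ‖o'‖ ≤ R1 + R1 :=
    (norm_le_coords o').trans (add_le_add habs0 habs1)
  have hρM : ρ' ≤ Rp + (R1 + R1) := by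
    have := dist_triangle (p u) (0 : Plane) o'
    rw [dist_zero_right, dist_zero_left] at this
    rw [hρ']
    calc dist (p u) o' ≤ ‖p u‖ + ‖o'‖ := this
      _ ≤ Rp + (R1 + R1) := add_le_add hpu hoB
  exact ⟨o', ρ', hoB, dist_nonneg, hρM, rfl, heq.symm, hrle,
    fun x hx => not_lt.mp (hemp x hx)⟩

end Statement3Aux

namespace Statement3Aux

lemma mem_SSet_iff {P : Finset Traj} {p q r : Traj} {a' b' Rn M : ℝ}
    {z : ℝ × Plane × ℝ} :
    z ∈ SSet P p q r a' b' Rn M ↔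
      (z.1 ∈ Set.Icc a' b' ∧ z.2.1 ∈ Metric.closedBall (0 : Plane) Rn ∧
      z.2.2 ∈ Set.Icc 0 M ∧ dist (p z.1) z.2.1 = z.2.2 ∧ dist (q z.1) z.2.1 = z.2.2 ∧
      dist (r z.1) z.2.1 ≤ z.2.2 ∧ ∀ x ∈ P.erase r, z.2.2 ≤ dist (x z.1) z.2.1) :=
  Iff.rfl

set_option maxHeartbeats 1000000 in
/-- Passing the witness property to a limit time. -/
lemma wit_limit (P : Finset Traj) (p q r : Traj)
    (hcont : ∀ x ∈ P, Continuous x) (hp : p ∈ P) (hq : q ∈ P) (hr : r ∈ P)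
    (hpqv : ∀ t, p t ≠ q t)
    (a b τ : ℝ) (hab : a < b) (hτ : τ ∈ Set.Icc a b)
    (hW : ∀ u ∈ Set.Ioo a b, Wit P p q r u)
    (hND : ∀ u ∈ Set.Ioo a b, ¬ DelaunayEdge P p q u)
    (hseg : ∀ x ∈ P, x ≠ p → x ≠ q → x ≠ r → x τ ∉ segment ℝ (p τ) (q τ)) :
    Wit P p q r τ := by
  have hτ1 : a ≤ τ := hτ.1
  have hτ2 : τ ≤ b := hτ.2
  obtain ⟨K, hK0, hguard⟩ := eventual_guard P p q r hcont hp hq hpqv τ hseg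
  have hpc : Continuous p := hcont p hp
  have hqc : Continuous q := hcont q hq
  set Rp : ℝ := ‖p τ‖ + 1 with hRp
  set Rq : ℝ := ‖q τ‖ + 1 with hRq
  have hbp : ∀ᶠ u in nhds τ, ‖p u‖ < Rp :=
    ((hpc.norm).tendsto τ).eventually (eventually_lt_nhds (by rw [hRp]; linarith))
  have hbq : ∀ᶠ u in nhds τ, ‖q u‖ < Rq :=
    ((hqc.norm).tendsto τ).eventually (eventually_lt_nhds (by rw [hRq]; linarith))
  obtain ⟨δ, hδ0, hδ⟩ := Metric.eventually_nhds_iff.mp ((hguard.and hbp).and hbq)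
  set Rn : ℝ := ((Rp + Rq)/2 + K*(Rp + Rq)) + ((Rp + Rq)/2 + K*(Rp + Rq)) with hRn
  set M : ℝ := Rp + Rn with hM
  set a' : ℝ := max a (τ - δ) with ha'
  set b' : ℝ := min b (τ + δ) with hb'
  have ha'b' : a' < b' := by
    rw [ha', hb']
    exact max_lt (lt_min hab (by linarith)) (lt_min (by linarith) (by linarith))
  have hsub : Set.Ioo a' b' ⊆ Prod.fst '' SSet P p q r a' b' Rn M := by
    intro u hu
    have hua : a < u := lt_of_le_of_lt (by rw [ha']; exact le_max_left _ _) hu.1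
    have hub : u < b := lt_of_lt_of_le hu.2 (by rw [hb']; exact min_le_left _ _)
    have hud : dist u τ < δ := by
      rw [Real.dist_eq, abs_sub_lt_iff]
      have j1 : τ - δ ≤ a' := by rw [ha']; exact le_max_right _ _
      have j2 : b' ≤ τ + δ := by rw [hb']; exact min_le_right _ _
      have j3 := hu.1
      have j4 := hu.2
      constructor <;> linarith
    obtain ⟨⟨hgu, hpu⟩, hqu⟩ := hδ hud
    obtain ⟨o, ρ, hoB, hρ0, hρM, h1, h2, h3, h4⟩ :=
      bounded_witness P p q r u (hpqv u) hK0 (hW u ⟨hua, hub⟩) (hND u ⟨hua, hub⟩) hgu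
        (le_of_lt hpu) (le_of_lt hqu)
    refine ⟨(u, o, ρ), ?_, rfl⟩
    rw [mem_SSet_iff]
    exact ⟨⟨le_of_lt hu.1, le_of_lt hu.2⟩,
      by rw [Metric.mem_closedBall, dist_zero_right]; rw [hRn]; exact hoB,
      ⟨hρ0, by rw [hM, hRn]; exact hρM⟩, h1, h2, h3, h4⟩
  have himg : IsClosed (Prod.fst '' SSet P p q r a' b' Rn M) :=
    ((SSet_compact P p q r hcont hp hq hr a' b' Rn M).image continuous_fst).isClosed
  have hτmem : τ ∈ Prod.fst '' SSet P p q r a' b' Rn M := by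
    apply closure_minimal hsub himg
    rw [closure_Ioo (ne_of_lt ha'b')]
    constructor
    · rw [ha']; exact max_le hτ1 (by linarith)
    · rw [hb']; exact le_min hτ2 (by linarith)
  obtain ⟨⟨u, o, ρ⟩, hmem, hfst⟩ := hτmem
  have hu : u = τ := hfst
  subst hu
  rw [mem_SSet_iff] at hmem
  obtain ⟨-, -, -, hpo, hqo, hro, hlast⟩ := hmem
  exact ⟨o, ρ, hpo, hqo, hro, fun x hx => not_lt.mpr (hlast x hx)⟩

/-- Statement 3, assembled. -/
lemma statement3_aux (P : Finset Traj) (hcont : ∀ p ∈ P, Continuous p)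
    (hnc : ∀ p ∈ P, ∀ q ∈ P, p ≠ q → ∀ t : ℝ, p t ≠ q t)
    (p q r : Traj) (t₀ t₁ : ℝ) (hcross : DelaunayCrossing P p q r t₀ t₁) :
    ∀ t ∈ Set.Icc t₀ t₁, DelaunayEdge P p r t ∧ DelaunayEdge P r q t := by
  obtain ⟨hpq, hpr, hqr⟩ := hcross.distinct
  have hpqv : ∀ t, p t ≠ q t := hnc p hcross.mem_p q hcross.mem_q hpq
  have hW : ∀ u ∈ Set.Ioo t₀ t₁, Wit P p q r u := fun u hu =>
    wit_interior (hcross.del_erase u ⟨le_of_lt hu.1, le_of_lt hu.2⟩) (hcross.not_del u hu)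
  have hsegOf : ∀ τ : ℝ, DelaunayEdge P p q τ →
      ∀ x ∈ P, x ≠ p → x ≠ q → x ≠ r → x τ ∉ segment ℝ (p τ) (q τ) := by
    intro τ hdel x hxP hxp hxq hxr hmem
    obtain ⟨o, ρ, ho1, ho2, hemp⟩ := hdel
    have hxpv : x τ ≠ p τ := hnc x hxP p hcross.mem_p hxp τ
    have hxqv : x τ ≠ q τ := hnc x hxP q hcross.mem_q hxq τ
    exact hemp x hxP (inside_of_seg hmem hxpv hxqv ho1 ho2)
  intro t ht
  have hWt : Wit P p q r t := by
    rcases eq_or_lt_of_le ht.1 with h0 | h0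
    · have hd0 : DelaunayEdge P p q t := by rw [← h0]; exact hcross.del_start
      exact wit_limit P p q r hcont hcross.mem_p hcross.mem_q hcross.mem_r hpqv
        t₀ t₁ t hcross.lt ht hW hcross.not_del (hsegOf t hd0)
    rcases eq_or_lt_of_le ht.2 with h1 | h1
    · have hd1 : DelaunayEdge P p q t := by rw [h1]; exact hcross.del_end
      exact wit_limit P p q r hcont hcross.mem_p hcross.mem_q hcross.mem_r hpqv
        t₀ t₁ t hcross.lt ht hW hcross.not_del (hsegOf t hd1)
    · exact hW t ⟨h0, h1⟩
  exact wit_to_delaunay hWt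
    (hnc p hcross.mem_p r hcross.mem_r hpr t)
    (hnc q hcross.mem_q r hcross.mem_r hqr t)

end Statement3Aux

/-- (Lemma 4.2 of the paper.) If `(pq, r, [t₀,t₁])` is a Delaunay
crossing for `P`, then each of the edges `pr` and `rq` is Delaunay with respect to
`P` at every time of `[t₀,t₁]`. -/
theorem statement3 (s c : ℕ) (P : Finset Traj)
    (hP : GenPos P) (hs : CocircBound P s) (hc : CollinBound P c)
    (p q r : Traj) (t₀ t₁ : ℝ)
    (hcross : DelaunayCrossing P p q r t₀ t₁) :
    ∀ t ∈ Set.Icc t₀ t₁, DelaunayEdge P p r t ∧ DelaunayEdge P r q t := by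
  exact Statement3Aux.statement3_aux P hP.cont hP.never_coincide p q r t₀ t₁ hcross
end
end

section
/- Let P be a set of point trajectories satisfying the pseudo-algebraic and general position assumptions, and let (pq, r, I) be a single Delaunay crossing for P in which r crosses the segment pq from L⁻_pq to L⁺_pq. Then for every s ∈ P∖{p,q,r} there is a time t ∈ I at which the four points p,q,r,s are concyclic with r(t) and s(t) lying strictly on opposite sides of the line through p(t) and q(t); moreover, this co-circularity occurs as s crosses the boundary circle of the circumdisc B[p,q,r] of p(t),q(t),r(t), either entering the cap B[p,q,r] ∩ L⁺_pq or leaving the cap B[p,q,r] ∩ L⁻_pq. -/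
/-!
Kinetic Delaunay triangulations of points moving in the plane:
common definitions (trajectories, Delaunay edges, co-circularity and
collinearity events, general position assumptions, Delaunay crossings).
-/

noncomputable section

attribute [local instance] Classical.propDecidable

namespace S4

def dsq (x y : Plane) : ℝ := (x 0 - y 0)^2 + (x 1 - y 1)^2

def hfn (a b x : Plane) : ℝ := (x 0 - a 0)*(x 0 - b 0) + (x 1 - a 1)*(x 1 - b 1)

lemma dsq_nonneg (x y : Plane) : 0 ≤ dsq x y := by unfold dsq; positivity

lemma dist_eq_sqrt_dsq (x y : Plane) : dist x y = Real.sqrt (dsq x y) := by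
  rw [EuclideanSpace.dist_eq, Fin.sum_univ_two, dsq]
  norm_num [Real.dist_eq, sq_abs]

lemma dist_sq (x y : Plane) : dist x y ^ 2 = dsq x y := by
  rw [dist_eq_sqrt_dsq, Real.sq_sqrt (dsq_nonneg x y)]

lemma dsq_eq_of_dist {x y : Plane} {ρ : ℝ} (h : dist x y = ρ) : dsq x y = ρ ^ 2 := by
  rw [← dist_sq, h]

lemma eq_of_dsq_eq_zero {x y : Plane} (h : dsq x y = 0) : x = y := by
  unfold dsq at h
  have h0 : (x 0 - y 0)^2 = 0 := by nlinarith [sq_nonneg (x 0 - y 0), sq_nonneg (x 1 - y 1)]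
  have h1 : (x 1 - y 1)^2 = 0 := by nlinarith [sq_nonneg (x 0 - y 0), sq_nonneg (x 1 - y 1)]
  have e0 : x 0 = y 0 := by nlinarith [h0]
  have e1 : x 1 = y 1 := by nlinarith [h1]
  ext i
  fin_cases i <;> assumption

lemma dsq_ne_zero {x y : Plane} (h : x ≠ y) : dsq x y ≠ 0 :=
  fun h0 => h (eq_of_dsq_eq_zero h0)

lemma dsq_pos {x y : Plane} (h : x ≠ y) : 0 < dsq x y :=
  lt_of_le_of_ne (dsq_nonneg x y) (Ne.symm (dsq_ne_zero h))

lemma dist_eq_of_dsq {x y : Plane} {ρ : ℝ} (h : dsq x y = ρ ^ 2) (hρ : 0 ≤ ρ) :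
    dist x y = ρ := by
  rw [dist_eq_sqrt_dsq, h]
  exact Real.sqrt_sq hρ

lemma dist_lt_of_dsq_lt {x y : Plane} {ρ : ℝ} (hρ : 0 ≤ ρ) (h : dsq x y < ρ ^ 2) :
    dist x y < ρ := by
  nlinarith [dist_sq x y, dist_nonneg (x := x) (y := y)]

lemma dsq_ge_of_not_dist_lt {x y : Plane} {ρ : ℝ} (hρ : 0 ≤ ρ) (h : ¬ dist x y < ρ) :
    ρ ^ 2 ≤ dsq x y := by
  push_neg at h
  nlinarith [dist_sq x y, dist_nonneg (x := x) (y := y)]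

/-- Master identity: for any center `o` equidistant from `a` and `b`. -/
lemma master {a b r s o : Plane} (hab : dsq a b ≠ 0) (h : dsq a o = dsq b o) :
    orient a b s * (dsq r o - dsq a o) - orient a b r * (dsq s o - dsq a o)
      = orient a b s * hfn a b r - orient a b r * hfn a b s := by
  have hz : dsq a o - dsq b o = 0 := by rw [h, sub_self]
  have key : dsq a b * ((orient a b s * (dsq r o - dsq a o) - orient a b r * (dsq s o - dsq a o))
      - (orient a b s * hfn a b r - orient a b r * hfn a b s))
      = (-(orient a b s * ((r 0 - a 0)*(b 0 - a 0) + (r 1 - a 1)*(b 1 - a 1))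
          - orient a b r * ((s 0 - a 0)*(b 0 - a 0) + (s 1 - a 1)*(b 1 - a 1))))
        * (dsq a o - dsq b o) := by
    unfold dsq hfn orient; ring
  rw [hz, mul_zero] at key
  rcases mul_eq_zero.mp key with h' | h'
  · exact absurd h' hab
  · linarith

/-- If `r` is on the line `ab`, its power w.r.t. any circle through `a, b` is `hfn a b r`. -/
lemma on_line_d {a b r o : Plane} (hab : dsq a b ≠ 0) (h : dsq a o = dsq b o)
    (hr : orient a b r = 0) : dsq r o - dsq a o = hfn a b r := by
  have hz : dsq a o - dsq b o = 0 := by rw [h, sub_self]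
  have key : dsq a b * (dsq r o - dsq a o - hfn a b r)
      = (-2*((o 0 - (a 0 + b 0)/2)*(-(b 1 - a 1)) + (o 1 - (a 1 + b 1)/2)*(b 0 - a 0)))
          * orient a b r
        + (-((r 0 - a 0)*(b 0 - a 0) + (r 1 - a 1)*(b 1 - a 1))) * (dsq a o - dsq b o) := by
    unfold dsq hfn orient; ring
  rw [hr, hz, mul_zero, mul_zero, add_zero] at key
  rcases mul_eq_zero.mp key with h' | h'
  · exact absurd h' hab
  · linarith

/-- The center of the circle through `a`, `b` in the pencil, parameter `lam`. -/
def cc (a b : Plane) (lam : ℝ) : Plane :=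
  WithLp.toLp 2 ![(a 0 + b 0)/2 + lam * (-(b 1 - a 1)), (a 1 + b 1)/2 + lam * (b 0 - a 0)]

lemma cc_ab (a b : Plane) (lam : ℝ) : dsq a (cc a b lam) = dsq b (cc a b lam) := by
  unfold dsq cc
  simp only [PiLp.toLp_apply, Matrix.cons_val_zero, Matrix.cons_val_one, Matrix.head_cons]
  ring

lemma cc_d (a b x : Plane) (lam : ℝ) :
    dsq x (cc a b lam) - dsq a (cc a b lam) = hfn a b x - 2*lam*orient a b x := by
  unfold dsq cc hfn orient
  simp only [PiLp.toLp_apply, Matrix.cons_val_zero, Matrix.cons_val_one, Matrix.head_cons]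
  ring

lemma center_unique {a b r o o' : Plane} (hr : orient a b r ≠ 0)
    (h1 : dsq a o = dsq b o) (h2 : dsq a o = dsq r o)
    (h1' : dsq a o' = dsq b o') (h2' : dsq a o' = dsq r o') : o = o' := by
  have k0 : (o 0 - o' 0) * (2 * orient a b r) = 0 := by
    unfold dsq at h1 h2 h1' h2'
    unfold orient
    linear_combination (r 1 - a 1)*h1 - (r 1 - a 1)*h1' - (b 1 - a 1)*h2 + (b 1 - a 1)*h2'
  have k1 : (o 1 - o' 1) * (2 * orient a b r) = 0 := by
    unfold dsq at h1 h2 h1' h2'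
    unfold orient
    linear_combination (-(r 0 - a 0))*h1 + (r 0 - a 0)*h1' + (b 0 - a 0)*h2 - (b 0 - a 0)*h2'
  have e0 : o 0 = o' 0 := by
    rcases mul_eq_zero.mp k0 with h' | h'
    · linarith
    · exact absurd (by linarith) hr
  have e1 : o 1 = o' 1 := by
    rcases mul_eq_zero.mp k1 with h' | h'
    · linarith
    · exact absurd (by linarith) hr
  ext i
  fin_cases i <;> assumption

lemma hfn_of_affine {a b x : Plane} {θ : ℝ} (h0 : x 0 = (1-θ)*a 0 + θ*b 0)
    (h1 : x 1 = (1-θ)*a 1 + θ*b 1) : hfn a b x = θ*(θ-1)*dsq a b := by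
  unfold hfn dsq; rw [h0, h1]; ring

lemma orient_of_affine {a b x : Plane} {θ : ℝ} (h0 : x 0 = (1-θ)*a 0 + θ*b 0)
    (h1 : x 1 = (1-θ)*a 1 + θ*b 1) : orient a b x = 0 := by
  unfold orient; rw [h0, h1]; ring

/-- Parametrize a point on the line `ab`. -/
lemma line_param {a b x : Plane} (hab : dsq a b ≠ 0) (h : orient a b x = 0) :
    ∃ θ : ℝ, x 0 = (1 - θ) * a 0 + θ * b 0 ∧ x 1 = (1 - θ) * a 1 + θ * b 1 := by
  have h' : (b 0 - a 0) * (x 1 - a 1) - (b 1 - a 1) * (x 0 - a 0) = 0 := h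
  set N : ℝ := (x 0 - a 0)*(b 0 - a 0) + (x 1 - a 1)*(b 1 - a 1) with hN
  have e0 : dsq a b * (x 0 - a 0) = N * (b 0 - a 0) := by
    unfold dsq; rw [hN]; linear_combination (-(b 1 - a 1)) * h'
  have e1 : dsq a b * (x 1 - a 1) = N * (b 1 - a 1) := by
    unfold dsq; rw [hN]; linear_combination (b 0 - a 0) * h'
  refine ⟨N / dsq a b, ?_, ?_⟩
  · field_simp
    linear_combination e0
  · field_simp
    linear_combination e1


lemma cont_coord {f : ℝ → Plane} (hf : Continuous f) (i : Fin 2) :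
    Continuous fun t => f t i := by
  have := PiLp.continuous_ofLp (p := 2) (β := fun _ : Fin 2 => ℝ)
  exact (continuous_apply i).comp (this.comp hf)

def sigma (p q x : Traj) (t : ℝ) : ℝ := orient (p t) (q t) (x t)
def Hf (p q x : Traj) (t : ℝ) : ℝ := hfn (p t) (q t) (x t)
def Gf (p q r s : Traj) (t : ℝ) : ℝ :=
  sigma p q s t * Hf p q r t - sigma p q r t * Hf p q s t

lemma cont_sigma {p q x : Traj} (hp : Continuous p) (hq : Continuous q)
    (hx : Continuous x) : Continuous (sigma p q x) := by
  unfold sigma orient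
  exact (((cont_coord hq 0).sub (cont_coord hp 0)).mul
      ((cont_coord hx 1).sub (cont_coord hp 1))).sub
    (((cont_coord hq 1).sub (cont_coord hp 1)).mul
      ((cont_coord hx 0).sub (cont_coord hp 0)))

lemma pos_near {f : ℝ → ℝ} (hf : Continuous f) {c : ℝ} (h : 0 < f c) :
    ∃ δ > (0:ℝ), ∀ u, |u - c| < δ → 0 < f u := by
  have hop : IsOpen {x : ℝ | 0 < f x} := isOpen_lt continuous_const hf
  rcases Metric.isOpen_iff.mp hop c h with ⟨δ, hδ, hb⟩
  exact ⟨δ, hδ, fun u hu => hb (by simpa [Metric.mem_ball, Real.dist_eq] using hu)⟩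

lemma nonneg_right_lim {f : ℝ → ℝ} (hf : Continuous f) {a c : ℝ} (h : a < c)
    (hp : ∀ x ∈ Set.Ioo a c, 0 ≤ f x) : 0 ≤ f a := by
  have ht : Filter.Tendsto f (nhdsWithin a (Set.Ioi a)) (nhds (f a)) :=
    (hf.continuousAt).continuousWithinAt
  refine ge_of_tendsto ht ?_
  filter_upwards [Ioo_mem_nhdsGT_of_mem (Set.mem_Ico.mpr ⟨le_refl a, h⟩)] with x hx
  exact hp x hx

lemma nonneg_left_lim {f : ℝ → ℝ} (hf : Continuous f) {a c : ℝ} (h : c < a)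
    (hp : ∀ x ∈ Set.Ioo c a, 0 ≤ f x) : 0 ≤ f a := by
  have ht : Filter.Tendsto f (nhdsWithin a (Set.Iio a)) (nhds (f a)) :=
    (hf.continuousAt).continuousWithinAt
  refine ge_of_tendsto ht ?_
  filter_upwards [Ioo_mem_nhdsLT_of_mem (Set.mem_Ioc.mpr ⟨h, le_refl a⟩)] with x hx
  exact hp x hx

lemma collinear_of_orient {a b x : Plane} (hab : a ≠ b) (h : orient a b x = 0) :
    Collinear ℝ ({a, b, x} : Set Plane) := by
  obtain ⟨θ, h0, h1⟩ := line_param (dsq_ne_zero hab) h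
  rw [collinear_iff_exists_forall_eq_smul_vadd]
  refine ⟨a, b - a, ?_⟩
  intro y hy
  simp only [Set.mem_insert_iff, Set.mem_singleton_iff] at hy
  rcases hy with hy | hy | hy
  · exact ⟨0, by simp [hy]⟩
  · refine ⟨1, ?_⟩
    rw [hy]
    ext i
    fin_cases i
    · show b 0 = ((1:ℝ) • (b - a) +ᵥ a) 0
      simp [vadd_eq_add, PiLp.add_apply, PiLp.sub_apply, PiLp.smul_apply, smul_eq_mul]
    · show b 1 = ((1:ℝ) • (b - a) +ᵥ a) 1
      simp [vadd_eq_add, PiLp.add_apply, PiLp.sub_apply, PiLp.smul_apply, smul_eq_mul]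
  · refine ⟨θ, ?_⟩
    rw [hy]
    ext i
    fin_cases i
    · show x 0 = (θ • (b - a) +ᵥ a) 0
      simp only [vadd_eq_add, PiLp.add_apply, PiLp.sub_apply, PiLp.smul_apply, smul_eq_mul]
      rw [h0]; ring
    · show x 1 = (θ • (b - a) +ᵥ a) 1
      simp only [vadd_eq_add, PiLp.add_apply, PiLp.sub_apply, PiLp.smul_apply, smul_eq_mul]
      rw [h1]; ring

lemma affine_eq_point {a b x : Plane} {θ : ℝ} (h0 : x 0 = (1-θ)*a 0 + θ*b 0)
    (h1 : x 1 = (1-θ)*a 1 + θ*b 1) : (1-θ) • a + θ • b = x := by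
  ext i
  fin_cases i
  · show ((1-θ) • a + θ • b) 0 = x 0
    simp only [PiLp.add_apply, PiLp.smul_apply, smul_eq_mul]
    rw [h0]
  · show ((1-θ) • a + θ • b) 1 = x 1
    simp only [PiLp.add_apply, PiLp.smul_apply, smul_eq_mul]
    rw [h1]

lemma segment_param {a b x : Plane} (h : x ∈ segment ℝ a b) :
    ∃ θ : ℝ, 0 ≤ θ ∧ θ ≤ 1 ∧ x 0 = (1-θ)*a 0 + θ*b 0 ∧ x 1 = (1-θ)*a 1 + θ*b 1 := by
  obtain ⟨u, v, hu, hv, huv, heq⟩ := h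
  refine ⟨v, hv, by linarith, ?_, ?_⟩
  · have := congrArg (fun z : Plane => z 0) heq
    simp only [PiLp.add_apply, PiLp.smul_apply, smul_eq_mul] at this
    rw [← this]; rw [show u = 1 - v by linarith]
  · have := congrArg (fun z : Plane => z 1) heq
    simp only [PiLp.add_apply, PiLp.smul_apply, smul_eq_mul] at this
    rw [← this]; rw [show u = 1 - v by linarith]

lemma affine_theta_zero {a b x : Plane} {θ : ℝ} (h0 : x 0 = (1-θ)*a 0 + θ*b 0)
    (h1 : x 1 = (1-θ)*a 1 + θ*b 1) (hθ : θ = 0) : x = a := by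
  subst hθ
  ext i
  fin_cases i
  · show x 0 = a 0
    rw [h0]; ring
  · show x 1 = a 1
    rw [h1]; ring

lemma affine_theta_one {a b x : Plane} {θ : ℝ} (h0 : x 0 = (1-θ)*a 0 + θ*b 0)
    (h1 : x 1 = (1-θ)*a 1 + θ*b 1) (hθ : θ = 1) : x = b := by
  subst hθ
  ext i
  fin_cases i
  · show x 0 = b 0
    rw [h0]; ring
  · show x 1 = b 1
    rw [h1]; ring

lemma not_both_zero {a b x : Plane} (hab : dsq a b ≠ 0) (hxa : x ≠ a) (hxb : x ≠ b)
    (hσ : orient a b x = 0) (hH : hfn a b x = 0) : False := by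
  obtain ⟨θ, h0, h1⟩ := line_param hab hσ
  have hfe : hfn a b x = θ*(θ-1)*dsq a b := hfn_of_affine h0 h1
  rw [hH] at hfe
  rcases mul_eq_zero.mp hfe.symm with h' | h'
  · rcases mul_eq_zero.mp h' with h'' | h''
    · exact hxa (affine_theta_zero h0 h1 h'')
    · exact hxb (affine_theta_one h0 h1 (by linarith))
  · exact hab h'

lemma not_in_out {a b r x : Plane} (hr : orient a b r ≠ 0)
    (hin : InCircumdisc a b r x) (hout : OutCircumdisc a b r x) : False := by
  obtain ⟨o, ρ, h1, h2, h3, h4⟩ := hin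
  obtain ⟨o', ρ', g1, g2, g3, g4⟩ := hout
  have e : o = o' := center_unique hr
    (by rw [dsq_eq_of_dist h1, dsq_eq_of_dist h2])
    (by rw [dsq_eq_of_dist h1, dsq_eq_of_dist h3])
    (by rw [dsq_eq_of_dist g1, dsq_eq_of_dist g2])
    (by rw [dsq_eq_of_dist g1, dsq_eq_of_dist g3])
  subst e
  have : ρ = ρ' := by rw [← h1, ← g1]
  subst this
  linarith


lemma cont_Hf {p q x : Traj} (hp : Continuous p) (hq : Continuous q)
    (hx : Continuous x) : Continuous (Hf p q x) := by
  unfold Hf hfn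
  exact (((cont_coord hx 0).sub (cont_coord hp 0)).mul
      ((cont_coord hx 0).sub (cont_coord hq 0))).add
    (((cont_coord hx 1).sub (cont_coord hp 1)).mul
      ((cont_coord hx 1).sub (cont_coord hq 1)))

lemma cont_Gf {p q r s : Traj} (hp : Continuous p) (hq : Continuous q)
    (hr : Continuous r) (hs : Continuous s) : Continuous (Gf p q r s) := by
  unfold Gf
  exact ((cont_sigma hp hq hs).mul (cont_Hf hp hq hr)).sub
    ((cont_sigma hp hq hr).mul (cont_Hf hp hq hs))

end S4

set_option maxHeartbeats 2000000 in
/-- (Lemma 4.4 of the paper.) If `(pq, r, [t₀,t₁])` is a single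
Delaunay crossing in which `r` crosses the segment `pq` from `L⁻_pq` to `L⁺_pq`,
then every other point `s ∈ P` is concyclic with `p, q, r` at some time of
`[t₀,t₁]`, with `r` and `s` strictly on opposite sides of the line through `p` and
`q`; moreover, at that time `s` crosses the circumcircle of `p, q, r`, either
entering the cap `B[p,q,r] ∩ L⁺_pq` or leaving the cap `B[p,q,r] ∩ L⁻_pq`. -/
theorem statement4 (sc cc : ℕ) (P : Finset Traj)
    (hP : GenPos P) (hs : CocircBound P sc) (hc : CollinBound P cc)
    (p q r : Traj) (t₀ t₁ : ℝ)
    (hcross : SingleCrossing P p q r t₀ t₁) :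
    ∀ s : Traj, s ∈ P → s ≠ p → s ≠ q → s ≠ r →
      ∃ t ∈ Set.Icc t₀ t₁,
        CocircAt p q r s t ∧
        OppositeSides (p t) (q t) (r t) (s t) ∧
        (EntersCapPlus p q r s t ∨ LeavesCapMinus p q r s t) := by
  intro s hsP hsp hsq hsr
  obtain ⟨hcr, huniq, hdir⟩ := hcross
  obtain ⟨hlt, hpP, hqP, hrP, hdist3, hdel0, hdel1, hnotdel, hhits, hdelE⟩ := hcr
  obtain ⟨hpq, hpr, hqr⟩ := hdist3
  have hPQ : ∀ t, p t ≠ q t := fun t => hP.never_coincide p hpP q hqP hpq t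
  have hRP : ∀ t, r t ≠ p t := fun t => hP.never_coincide r hrP p hpP (Ne.symm hpr) t
  have hRQ : ∀ t, r t ≠ q t := fun t => hP.never_coincide r hrP q hqP (Ne.symm hqr) t
  have hSP : ∀ t, s t ≠ p t := fun t => hP.never_coincide s hsP p hpP hsp t
  have hSQ : ∀ t, s t ≠ q t := fun t => hP.never_coincide s hsP q hqP hsq t
  have hD : ∀ t, S4.dsq (p t) (q t) ≠ 0 := fun t => S4.dsq_ne_zero (hPQ t)
  have hDpos : ∀ t, 0 < S4.dsq (p t) (q t) := fun t => S4.dsq_pos (hPQ t)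
  have hcp := hP.cont p hpP
  have hcq := hP.cont q hqP
  have hcr' := hP.cont r hrP
  have hcs := hP.cont s hsP
  have contσr : Continuous (S4.sigma p q r) := S4.cont_sigma hcp hcq hcr'
  have contσs : Continuous (S4.sigma p q s) := S4.cont_sigma hcp hcq hcs
  have contG : Continuous (S4.Gf p q r s) := S4.cont_Gf hcp hcq hcr' hcs
  -- decomposition of G from a Delaunay disc
  have Gdecomp : ∀ t : ℝ, DelaunayEdge P p q t → ∃ Dr Ds : ℝ, 0 ≤ Dr ∧ 0 ≤ Ds ∧
      S4.Gf p q r s t = S4.sigma p q s t * Dr - S4.sigma p q r t * Ds := by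
    intro t hDel
    obtain ⟨o, ρ, h1, h2, hall⟩ := hDel
    have hρ : 0 ≤ ρ := h1 ▸ dist_nonneg
    have e1 : S4.dsq (p t) o = ρ^2 := S4.dsq_eq_of_dist h1
    have e2 : S4.dsq (q t) o = ρ^2 := S4.dsq_eq_of_dist h2
    have hr' : ρ^2 ≤ S4.dsq (r t) o := S4.dsq_ge_of_not_dist_lt hρ (hall r hrP)
    have hs' : ρ^2 ≤ S4.dsq (s t) o := S4.dsq_ge_of_not_dist_lt hρ (hall s hsP)
    refine ⟨S4.dsq (r t) o - S4.dsq (p t) o, S4.dsq (s t) o - S4.dsq (p t) o,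
      by linarith, by linarith, ?_⟩
    have hm := S4.master (hD t) (by rw [e1, e2]) (r := r t) (s := s t) (o := o)
    show S4.sigma p q s t * S4.hfn (p t) (q t) (r t)
        - S4.sigma p q r t * S4.hfn (p t) (q t) (s t) = _
    unfold S4.sigma
    linarith [hm]
  -- if s is on the line pq during I, then its h-function is nonnegative
  have HsNonneg : ∀ t ∈ Set.Icc t₀ t₁, S4.sigma p q s t = 0 → 0 ≤ S4.Hf p q s t := by
    intro t ht hσ
    obtain ⟨o, ρ, h1, h2, hall⟩ := hdelE t ht
    have hρ : 0 ≤ ρ := h1 ▸ dist_nonneg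
    have e1 : S4.dsq (p t) o = ρ^2 := S4.dsq_eq_of_dist h1
    have e2 : S4.dsq (q t) o = ρ^2 := S4.dsq_eq_of_dist h2
    have hs' : ρ^2 ≤ S4.dsq (s t) o :=
      S4.dsq_ge_of_not_dist_lt hρ (hall s (Finset.mem_erase.mpr ⟨hsr, hsP⟩))
    have hline := S4.on_line_d (hD t) (by rw [e1, e2]) (r := s t) hσ
    show (0:ℝ) ≤ S4.hfn (p t) (q t) (s t)
    linarith [hline]
  -- s never lies on the line pq at a point coinciding with p or q
  have sNotEnd : ∀ t, S4.sigma p q s t = 0 → S4.Hf p q s t = 0 → False := by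
    intro t hσ hH
    exact S4.not_both_zero (hD t) (hSP t) (hSQ t) hσ hH
  have rNotEnd : ∀ t, S4.sigma p q r t = 0 → S4.Hf p q r t = 0 → False := by
    intro t hσ hH
    exact S4.not_both_zero (hD t) (hRP t) (hRQ t) hσ hH
  -- the crossing time
  obtain ⟨tc, htcI, htcseg⟩ := hhits
  obtain ⟨-, δstar, hδstar, hleft, hright⟩ := hdir tc htcI htcseg
  obtain ⟨θc, hθc0, hθc1, hc0, hc1⟩ := S4.segment_param htcseg
  have hσrc : S4.sigma p q r tc = 0 := S4.orient_of_affine hc0 hc1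
  have hHrc : S4.Hf p q r tc = θc*(θc-1)*S4.dsq (p tc) (q tc) := S4.hfn_of_affine hc0 hc1
  have hθcpos : 0 < θc := by
    rcases lt_or_eq_of_le hθc0 with h | h
    · exact h
    · exact absurd (S4.affine_theta_zero hc0 hc1 h.symm) (hRP tc)
  have hθclt : θc < 1 := by
    rcases lt_or_eq_of_le hθc1 with h | h
    · exact h
    · exact absurd (S4.affine_theta_one hc0 hc1 h) (hRQ tc)
  have hHrcneg : S4.Hf p q r tc < 0 := by
    have hfact : θc * (θc - 1) < 0 := by nlinarith
    rw [hHrc]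
    exact mul_neg_of_neg_of_pos hfact (hDpos tc)
  have notDelc : ¬ DelaunayEdge P p q tc := by
    rintro ⟨o, ρ, h1, h2, hall⟩
    have hρ : 0 ≤ ρ := h1 ▸ dist_nonneg
    have e1 : S4.dsq (p tc) o = ρ^2 := S4.dsq_eq_of_dist h1
    have e2 : S4.dsq (q tc) o = ρ^2 := S4.dsq_eq_of_dist h2
    have hline := S4.on_line_d (hD tc) (by rw [e1, e2]) (r := r tc) hσrc
    have hge := S4.dsq_ge_of_not_dist_lt hρ (hall r hrP)
    have : S4.Hf p q r tc = S4.hfn (p tc) (q tc) (r tc) := rfl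
    linarith [hline, hge, hHrcneg]
  have htc0 : tc ≠ t₀ := fun h => notDelc (h ▸ hdel0)
  have htc1 : tc ≠ t₁ := fun h => notDelc (h ▸ hdel1)
  have htcO : t₀ < tc ∧ tc < t₁ :=
    ⟨lt_of_le_of_ne htcI.1 (Ne.symm htc0), lt_of_le_of_ne htcI.2 htc1⟩
  -- two simultaneous collinearities are impossible
  have collinContr : ∀ t, S4.sigma p q r t = 0 → S4.sigma p q s t = 0 → False := by
    intro t h1 h2
    have c1 : CollinAt p q r t := S4.collinear_of_orient (hPQ t) h1
    have c2 : CollinAt p q s t := S4.collinear_of_orient (hPQ t) h2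
    have hsets := hP.unique_collin t p hpP q hqP r hrP p hpP q hqP s hsP
      ⟨hpq, hpr, hqr⟩ ⟨hpq, Ne.symm hsp, Ne.symm hsq⟩ c1 c2
    have hrmem : r ∈ ({p, q, s} : Set Traj) := by
      rw [← hsets]; simp
    simp only [Set.mem_insert_iff, Set.mem_singleton_iff] at hrmem
    rcases hrmem with h | h | h
    · exact hpr h.symm
    · exact hqr h.symm
    · exact hsr h.symm
  have hσsc : S4.sigma p q s tc ≠ 0 := fun h => collinContr tc hσrc h
  have hd4 : Distinct4 p q r s := ⟨hpq, hpr, Ne.symm hsp, hqr, Ne.symm hsq, Ne.symm hsr⟩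
  -- disc through p, q, r at times when they are not collinear, and the power of s
  have discOfG : ∀ u : ℝ, S4.sigma p q r u ≠ 0 → ∃ (o : Plane) (ρ : ℝ), 0 < ρ ∧
      dist (p u) o = ρ ∧ dist (q u) o = ρ ∧ dist (r u) o = ρ ∧
      S4.sigma p q r u * (S4.dsq (s u) o - S4.dsq (p u) o) = -(S4.Gf p q r s u) := by
    intro u hu
    have hu' : orient (p u) (q u) (r u) ≠ 0 := hu
    set lam := S4.Hf p q r u / (2 * S4.sigma p q r u) with hlam
    have hab : S4.dsq (p u) (S4.cc (p u) (q u) lam) = S4.dsq (q u) (S4.cc (p u) (q u) lam) :=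
      S4.cc_ab _ _ _
    have hdr : S4.dsq (r u) (S4.cc (p u) (q u) lam) - S4.dsq (p u) (S4.cc (p u) (q u) lam) = 0 := by
      rw [S4.cc_d]
      rw [hlam]
      have h2 : (2 : ℝ) * S4.sigma p q r u ≠ 0 := by
        intro h; exact hu (by linarith [h])
      field_simp
      unfold S4.Hf S4.sigma
      ring
    have hds : S4.sigma p q r u * (S4.dsq (s u) (S4.cc (p u) (q u) lam)
        - S4.dsq (p u) (S4.cc (p u) (q u) lam)) = -(S4.Gf p q r s u) := by
      rw [S4.cc_d]
      rw [hlam]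
      have h2 : (2 : ℝ) * S4.sigma p q r u ≠ 0 := by
        intro h; exact hu (by linarith [h])
      field_simp
      unfold S4.Gf S4.Hf S4.sigma
      ring
    have hppos : 0 < dist (p u) (S4.cc (p u) (q u) lam) := by
      rcases lt_or_eq_of_le (dist_nonneg (x := p u) (y := S4.cc (p u) (q u) lam)) with h | h
      · exact h
      · exfalso
        have hpo : S4.dsq (p u) (S4.cc (p u) (q u) lam) = 0 := by
          have := S4.dsq_eq_of_dist h.symm; simpa using this
        have hqo : S4.dsq (q u) (S4.cc (p u) (q u) lam) = 0 := by rw [← hab]; exact hpo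
        have := (S4.eq_of_dsq_eq_zero hpo).trans (S4.eq_of_dsq_eq_zero hqo).symm
        exact hPQ u this
    refine ⟨S4.cc (p u) (q u) lam, dist (p u) (S4.cc (p u) (q u) lam), hppos, rfl, ?_, ?_, hds⟩
    · exact S4.dist_eq_of_dsq (by rw [← hab, ← S4.dist_sq]) dist_nonneg
    · refine S4.dist_eq_of_dsq ?_ dist_nonneg
      rw [show S4.dsq (r u) (S4.cc (p u) (q u) lam) = S4.dsq (p u) (S4.cc (p u) (q u) lam) by
        linarith [hdr], ← S4.dist_sq]
  have cocircOfG : ∀ u, S4.sigma p q r u ≠ 0 → S4.Gf p q r s u = 0 → CocircAt p q r s u := by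
    intro u hu hG
    obtain ⟨o, ρ, hρ, h1, h2, h3, h4⟩ := discOfG u hu
    have hz : S4.sigma p q r u * (S4.dsq (s u) o - S4.dsq (p u) o) = 0 := by rw [h4, hG, neg_zero]
    have hds : S4.dsq (s u) o - S4.dsq (p u) o = 0 := by
      rcases mul_eq_zero.mp hz with h | h
      · exact absurd h hu
      · exact h
    refine ⟨o, ρ, hρ, h1, h2, h3, ?_⟩
    refine S4.dist_eq_of_dsq ?_ (le_of_lt hρ)
    rw [show S4.dsq (s u) o = S4.dsq (p u) o by linarith [hds], S4.dsq_eq_of_dist h1]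
  have inOfG : ∀ u, 0 < S4.Gf p q r s u * S4.sigma p q r u →
      InCircumdisc (p u) (q u) (r u) (s u) := by
    intro u hGσ
    have hu : S4.sigma p q r u ≠ 0 := by
      intro h; rw [h, mul_zero] at hGσ; exact lt_irrefl _ hGσ
    obtain ⟨o, ρ, hρ, h1, h2, h3, h4⟩ := discOfG u hu
    have h5 : S4.sigma p q r u ^ 2 * (S4.dsq (s u) o - S4.dsq (p u) o)
        = -(S4.Gf p q r s u * S4.sigma p q r u) := by linear_combination S4.sigma p q r u * h4
    have h6 : 0 < S4.sigma p q r u ^ 2 := by positivity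
    have hlt : S4.dsq (s u) o < S4.dsq (p u) o := by nlinarith [h5, h6, hGσ]
    refine ⟨o, ρ, h1, h2, h3, ?_⟩
    refine S4.dist_lt_of_dsq_lt (le_of_lt hρ) ?_
    rw [← S4.dsq_eq_of_dist h1]
    exact hlt
  -- main case distinction on the side of s at the crossing time
  rcases lt_or_gt_of_ne hσsc with hsneg | hspos
  · -- Case A : s is in L⁺ at time tc; the cocircularity happens in [t₀, tc)
    have hGtc : 0 < S4.Gf p q r s tc := by
      have : S4.Gf p q r s tc = S4.sigma p q s tc * S4.Hf p q r tc
          - S4.sigma p q r tc * S4.Hf p q s tc := rfl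
      rw [this, hσrc]
      nlinarith [hsneg, hHrcneg]
    obtain ⟨δ1, hδ1, hG1⟩ := S4.pos_near contG hGtc
    obtain ⟨δ2, hδ2, hS2⟩ := S4.pos_near contσs.neg (by simpa using hsneg : 0 < -S4.sigma p q s tc)
    have hδ'pos : 0 < min (min δ1 δ2) (min δstar (tc - t₀)) := by
      refine lt_min (lt_min hδ1 hδ2) (lt_min hδstar ?_)
      linarith [htcO.1]
    set δ' := min (min δ1 δ2) (min δstar (tc - t₀)) with hδ'def
    set c := tc - δ' with hcdef
    have hcget : t₀ ≤ c := by
      have h1 : δ' ≤ tc - t₀ := le_trans (min_le_right _ _) (min_le_right _ _)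
      rw [hcdef]; linarith
    have hclt : c < tc := by rw [hcdef]; linarith [hδ'pos]
    have hvio : ∀ u, c < u → u < tc →
        0 < S4.Gf p q r s u ∧ 0 < S4.sigma p q r u ∧ S4.sigma p q s u < 0 := by
      intro u h1 h2
      have habs : |u - tc| < δ' := by
        rw [abs_lt]; constructor <;> [linarith [hδ'pos]; linarith [hδ'pos]]
      refine ⟨hG1 u (lt_of_lt_of_le habs (le_trans (min_le_left _ _) (min_le_left _ _))), ?_, ?_⟩
      · refine hleft u ⟨?_, h2⟩
        have : δ' ≤ δstar := le_trans (min_le_right _ _) (min_le_left _ _)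
        rw [hcdef] at h1; linarith
      · have := hS2 u (lt_of_lt_of_le habs (le_trans (min_le_left _ _) (min_le_right _ _)))
        rw [Pi.neg_apply] at this
        linarith [this]
    set W : Set ℝ := ({t : ℝ | S4.Gf p q r s t ≤ 0} ∪
        ({t : ℝ | S4.sigma p q r t ≤ 0} ∪ {t : ℝ | 0 ≤ S4.sigma p q s t})) ∩ Set.Icc t₀ c
      with hWdef
    have hmemW : ∀ t, t ∈ W ↔ ((S4.Gf p q r s t ≤ 0 ∨ S4.sigma p q r t ≤ 0 ∨
        0 ≤ S4.sigma p q s t) ∧ t ∈ Set.Icc t₀ c) := by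
      intro t
      simp [hWdef, Set.mem_union, Set.mem_inter_iff, Set.mem_setOf_eq]
    have hWclosed : IsClosed W := by
      rw [hWdef]
      exact ((isClosed_le contG continuous_const).union
        ((isClosed_le contσr continuous_const).union
          (isClosed_le continuous_const contσs))).inter isClosed_Icc
    have ht₀W : t₀ ∈ W := by
      rw [hmemW]
      refine ⟨?_, le_refl t₀, hcget⟩
      by_contra hcon
      push_neg at hcon
      obtain ⟨hG0, hσr0, hσs0⟩ := hcon
      obtain ⟨Dr, Ds, hDr, hDs, hGeq⟩ := Gdecomp t₀ hdel0
      have k1 : S4.sigma p q s t₀ * Dr ≤ 0 := mul_nonpos_of_nonpos_of_nonneg (le_of_lt hσs0) hDr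
      have k2 : 0 ≤ S4.sigma p q r t₀ * Ds := mul_nonneg (le_of_lt hσr0) hDs
      linarith [hGeq, hG0]
    have hWne : W.Nonempty := ⟨t₀, ht₀W⟩
    have hWbdd : BddAbove W := ⟨c, fun x hx => ((hmemW x).mp hx).2.2⟩
    set a := sSup W with hadef
    have haW : a ∈ W := hWclosed.csSup_mem hWne hWbdd
    have haIcc : a ∈ Set.Icc t₀ c := ((hmemW a).mp haW).2
    have haltc : a < tc := lt_of_le_of_lt haIcc.2 hclt
    have hAfter : ∀ u, a < u → u < tc →
        0 < S4.Gf p q r s u ∧ 0 < S4.sigma p q r u ∧ S4.sigma p q s u < 0 := by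
      intro u h1 h2
      rcases le_or_gt u c with hle | hgt
      · have hnW : u ∉ W := fun huW => absurd (le_csSup hWbdd huW) (not_le.mpr h1)
        have hBu : u ∈ Set.Icc t₀ c := ⟨by linarith [haIcc.1], hle⟩
        have hA : ¬(S4.Gf p q r s u ≤ 0 ∨ S4.sigma p q r u ≤ 0 ∨ 0 ≤ S4.sigma p q s u) :=
          fun hA => hnW ((hmemW u).mpr ⟨hA, hBu⟩)
        push_neg at hA
        exact hA
      · exact hvio u hgt h2
    have hGa : 0 ≤ S4.Gf p q r s a :=
      S4.nonneg_right_lim contG haltc (fun x hx => le_of_lt (hAfter x hx.1 hx.2).1)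
    have hσra : 0 ≤ S4.sigma p q r a :=
      S4.nonneg_right_lim contσr haltc (fun x hx => le_of_lt (hAfter x hx.1 hx.2).2.1)
    have hσsa : S4.sigma p q s a ≤ 0 := by
      have h' := S4.nonneg_right_lim (f := fun t => -S4.sigma p q s t) contσs.neg haltc
        (fun x hx => by
          have := (hAfter x hx.1 hx.2).2.2
          linarith)
      linarith
    have haI : a ∈ Set.Icc t₀ t₁ := ⟨haIcc.1, by linarith [haIcc.2, hclt, htcO.2]⟩
    have hσrapos : 0 < S4.sigma p q r a := by
      rcases lt_or_eq_of_le hσra with h | h0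
      · exact h
      exfalso
      have h0' : S4.sigma p q r a = 0 := h0.symm
      obtain ⟨θ, ha0, ha1⟩ := S4.line_param (hD a) h0'
      have hHra : S4.Hf p q r a = θ*(θ-1)*S4.dsq (p a) (q a) := S4.hfn_of_affine ha0 ha1
      have hHrapos : 0 < S4.Hf p q r a := by
        rcases lt_trichotomy (S4.Hf p q r a) 0 with hlt' | he | hgt'
        · -- r a lies on the open segment, contradicting uniqueness of the crossing time
          have hprod : θ * (θ - 1) < 0 := by
            by_contra hcon
            push_neg at hcon
            have := mul_nonneg hcon (le_of_lt (hDpos a))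
            rw [← hHra] at this
            linarith
          have hθio : 0 < θ ∧ θ < 1 :=
            ⟨by nlinarith [hprod, sq_nonneg θ], by nlinarith [hprod, sq_nonneg (θ - 1)]⟩
          have hseg : r a ∈ segment ℝ (p a) (q a) :=
            ⟨1-θ, θ, by linarith [hθio.2], le_of_lt hθio.1, by ring,
              S4.affine_eq_point ha0 ha1⟩
          have : a = tc := huniq a haI tc htcI hseg htcseg
          linarith
        · exact absurd he (fun he => rNotEnd a h0' he)
        · exact hgt'
      have hGa' : S4.Gf p q r s a = S4.sigma p q s a * S4.Hf p q r a := by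
        have : S4.Gf p q r s a = S4.sigma p q s a * S4.Hf p q r a
            - S4.sigma p q r a * S4.Hf p q s a := rfl
        rw [this, h0']; ring
      have k1 : S4.sigma p q s a * S4.Hf p q r a ≤ 0 :=
        mul_nonpos_of_nonpos_of_nonneg hσsa (le_of_lt hHrapos)
      have k2 : S4.sigma p q s a * S4.Hf p q r a = 0 := le_antisymm k1 (hGa' ▸ hGa)
      have hσsa0 : S4.sigma p q s a = 0 :=
        (mul_eq_zero.mp k2).resolve_right (ne_of_gt hHrapos)
      exact collinContr a h0' hσsa0
    have hσsaneg : S4.sigma p q s a < 0 := by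
      rcases lt_or_eq_of_le hσsa with h | h0
      · exact h
      exfalso
      have hGa' : S4.Gf p q r s a = -(S4.sigma p q r a * S4.Hf p q s a) := by
        have : S4.Gf p q r s a = S4.sigma p q s a * S4.Hf p q r a
            - S4.sigma p q r a * S4.Hf p q s a := rfl
        rw [this, h0]; ring
      have hHsa : S4.Hf p q s a ≤ 0 := by nlinarith [hGa, hGa', hσrapos]
      have := HsNonneg a haI h0
      exact sNotEnd a h0 (le_antisymm hHsa this)
    have hGa0 : S4.Gf p q r s a = 0 := by
      rcases ((hmemW a).mp haW).1 with h | h | h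
      · exact le_antisymm h hGa
      · exact absurd h (not_le.mpr hσrapos)
      · exact absurd h (not_le.mpr hσsaneg)
    have hcoc : CocircAt p q r s a := cocircOfG a (ne_of_gt hσrapos) hGa0
    have hopp : OppositeSides (p a) (q a) (r a) (s a) :=
      mul_neg_of_pos_of_neg hσrapos hσsaneg
    obtain ⟨δt, hδt, hbr⟩ := hP.circle_transversal p hpP q hqP r hrP s hsP hd4 a hcoc
    have hInAfter : ∀ u, a < u → u < tc → InCircumdisc (p u) (q u) (r u) (s u) := by
      intro u h1 h2
      exact inOfG u (mul_pos (hAfter u h1 h2).1 (hAfter u h1 h2).2.1)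
    rcases hbr with ⟨hbefore, hafter⟩ | ⟨hbefore, hafter⟩
    · exfalso
      have hmin : a < min (a + δt) tc := lt_min (by linarith) haltc
      set u := (a + min (a + δt) tc)/2 with hudef
      have hu1 : a < u := by rw [hudef]; linarith [hmin]
      have hu2 : u < a + δt := by
        have h' : min (a + δt) tc ≤ a + δt := min_le_left _ _
        rw [hudef]; linarith [hmin]
      have hu3 : u < tc := by
        have h' : min (a + δt) tc ≤ tc := min_le_right _ _
        rw [hudef]; linarith [hmin]
      have hOut := hafter u ⟨hu1, hu2⟩
      have hIn := hInAfter u hu1 hu3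
      exact S4.not_in_out (ne_of_gt (hAfter u hu1 hu3).2.1) hIn hOut
    · refine ⟨a, haI, hcoc, hopp, Or.inl ?_⟩
      refine ⟨min δt (tc - a), lt_min hδt (by linarith), ?_, ?_⟩
      · intro u hu
        refine hbefore u ⟨?_, hu.2⟩
        have := min_le_left δt (tc - a)
        linarith [hu.1]
      · intro u hu
        have hu2 : u < tc := by
          have := min_le_right δt (tc - a)
          linarith [hu.2]
        have h3 := hAfter u hu.1 hu2
        refine ⟨hafter u ⟨hu.1, ?_⟩, h3.2.2⟩
        have := min_le_left δt (tc - a)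
        linarith [hu.2]
  · -- Case B : s is in L⁻ at time tc; the cocircularity happens in (tc, t₁]
    have hGtc : S4.Gf p q r s tc < 0 := by
      have : S4.Gf p q r s tc = S4.sigma p q s tc * S4.Hf p q r tc
          - S4.sigma p q r tc * S4.Hf p q s tc := rfl
      rw [this, hσrc]
      nlinarith [hspos, hHrcneg]
    obtain ⟨δ1, hδ1, hG1⟩ := S4.pos_near contG.neg (by simpa using hGtc : 0 < -S4.Gf p q r s tc)
    obtain ⟨δ2, hδ2, hS2⟩ := S4.pos_near contσs hspos
    have hδ'pos : 0 < min (min δ1 δ2) (min δstar (t₁ - tc)) := by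
      refine lt_min (lt_min hδ1 hδ2) (lt_min hδstar ?_)
      linarith [htcO.2]
    set δ' := min (min δ1 δ2) (min δstar (t₁ - tc)) with hδ'def
    set c := tc + δ' with hcdef
    have hcget : c ≤ t₁ := by
      have h1 : δ' ≤ t₁ - tc := le_trans (min_le_right _ _) (min_le_right _ _)
      rw [hcdef]; linarith
    have hclt : tc < c := by rw [hcdef]; linarith [hδ'pos]
    have hvio : ∀ u, tc < u → u < c →
        S4.Gf p q r s u < 0 ∧ S4.sigma p q r u < 0 ∧ 0 < S4.sigma p q s u := by
      intro u h1 h2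
      have habs : |u - tc| < δ' := by
        rw [abs_lt]; constructor <;> [linarith [hδ'pos]; linarith [hδ'pos]]
      refine ⟨?_, ?_, ?_⟩
      · have := hG1 u (lt_of_lt_of_le habs (le_trans (min_le_left _ _) (min_le_left _ _)))
        simp only [Pi.neg_apply] at this
        linarith
      · refine hright u ⟨h1, ?_⟩
        have : δ' ≤ δstar := le_trans (min_le_right _ _) (min_le_left _ _)
        rw [hcdef] at h2; linarith
      · exact hS2 u (lt_of_lt_of_le habs (le_trans (min_le_left _ _) (min_le_right _ _)))
    set W : Set ℝ := ({t : ℝ | 0 ≤ S4.Gf p q r s t} ∪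
        ({t : ℝ | 0 ≤ S4.sigma p q r t} ∪ {t : ℝ | S4.sigma p q s t ≤ 0})) ∩ Set.Icc c t₁
      with hWdef
    have hmemW : ∀ t, t ∈ W ↔ ((0 ≤ S4.Gf p q r s t ∨ 0 ≤ S4.sigma p q r t ∨
        S4.sigma p q s t ≤ 0) ∧ t ∈ Set.Icc c t₁) := by
      intro t
      simp [hWdef, Set.mem_union, Set.mem_inter_iff, Set.mem_setOf_eq]
    have hWclosed : IsClosed W := by
      rw [hWdef]
      exact ((isClosed_le continuous_const contG).union
        ((isClosed_le continuous_const contσr).union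
          (isClosed_le contσs continuous_const))).inter isClosed_Icc
    have ht₁W : t₁ ∈ W := by
      rw [hmemW]
      refine ⟨?_, hcget, le_refl t₁⟩
      by_contra hcon
      push_neg at hcon
      obtain ⟨hG0, hσr0, hσs0⟩ := hcon
      obtain ⟨Dr, Ds, hDr, hDs, hGeq⟩ := Gdecomp t₁ hdel1
      have k1 : 0 ≤ S4.sigma p q s t₁ * Dr := mul_nonneg (le_of_lt hσs0) hDr
      have k2 : S4.sigma p q r t₁ * Ds ≤ 0 := mul_nonpos_of_nonpos_of_nonneg (le_of_lt hσr0) hDs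
      linarith [hGeq, hG0]
    have hWne : W.Nonempty := ⟨t₁, ht₁W⟩
    have hWbdd : BddBelow W := ⟨c, fun x hx => ((hmemW x).mp hx).2.1⟩
    set b := sInf W with hbdef
    have hbW : b ∈ W := hWclosed.csInf_mem hWne hWbdd
    have hbIcc : b ∈ Set.Icc c t₁ := ((hmemW b).mp hbW).2
    have hbgttc : tc < b := lt_of_lt_of_le hclt hbIcc.1
    have hBefore : ∀ u, tc < u → u < b →
        S4.Gf p q r s u < 0 ∧ S4.sigma p q r u < 0 ∧ 0 < S4.sigma p q s u := by
      intro u h1 h2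
      rcases le_or_gt c u with hle | hgt
      · have hnW : u ∉ W := fun huW => absurd (csInf_le hWbdd huW) (not_le.mpr h2)
        have hBu : u ∈ Set.Icc c t₁ := ⟨hle, by linarith [hbIcc.2]⟩
        have hA : ¬(0 ≤ S4.Gf p q r s u ∨ 0 ≤ S4.sigma p q r u ∨ S4.sigma p q s u ≤ 0) :=
          fun hA => hnW ((hmemW u).mpr ⟨hA, hBu⟩)
        push_neg at hA
        exact hA
      · exact hvio u h1 hgt
    have hGb : S4.Gf p q r s b ≤ 0 := by
      have h' := S4.nonneg_left_lim (f := fun t => -S4.Gf p q r s t) contG.neg hbgttc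
        (fun x hx => by
          have := (hBefore x hx.1 hx.2).1
          linarith)
      linarith
    have hσrb : S4.sigma p q r b ≤ 0 := by
      have h' := S4.nonneg_left_lim (f := fun t => -S4.sigma p q r t) contσr.neg hbgttc
        (fun x hx => by
          have := (hBefore x hx.1 hx.2).2.1
          linarith)
      linarith
    have hσsb : 0 ≤ S4.sigma p q s b :=
      S4.nonneg_left_lim contσs hbgttc (fun x hx => le_of_lt (hBefore x hx.1 hx.2).2.2)
    have hbI : b ∈ Set.Icc t₀ t₁ := ⟨by linarith [hbIcc.1, hclt, htcO.1], hbIcc.2⟩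
    have hσrbneg : S4.sigma p q r b < 0 := by
      rcases lt_or_eq_of_le hσrb with h | h0
      · exact h
      exfalso
      obtain ⟨θ, hb0, hb1⟩ := S4.line_param (hD b) h0
      have hHrb : S4.Hf p q r b = θ*(θ-1)*S4.dsq (p b) (q b) := S4.hfn_of_affine hb0 hb1
      have hHrbpos : 0 < S4.Hf p q r b := by
        rcases lt_trichotomy (S4.Hf p q r b) 0 with hlt' | he | hgt'
        · have hprod : θ * (θ - 1) < 0 := by
            by_contra hcon
            push_neg at hcon
            have := mul_nonneg hcon (le_of_lt (hDpos b))
            rw [← hHrb] at this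
            linarith
          have hθio : 0 < θ ∧ θ < 1 :=
            ⟨by nlinarith [hprod, sq_nonneg θ], by nlinarith [hprod, sq_nonneg (θ - 1)]⟩
          have hseg : r b ∈ segment ℝ (p b) (q b) :=
            ⟨1-θ, θ, by linarith [hθio.2], le_of_lt hθio.1, by ring,
              S4.affine_eq_point hb0 hb1⟩
          have : b = tc := huniq b hbI tc htcI hseg htcseg
          linarith
        · exact absurd he (fun he => rNotEnd b h0 he)
        · exact hgt'
      have hGb' : S4.Gf p q r s b = S4.sigma p q s b * S4.Hf p q r b := by
        have : S4.Gf p q r s b = S4.sigma p q s b * S4.Hf p q r b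
            - S4.sigma p q r b * S4.Hf p q s b := rfl
        rw [this, h0]; ring
      have k1 : 0 ≤ S4.sigma p q s b * S4.Hf p q r b :=
        mul_nonneg hσsb (le_of_lt hHrbpos)
      have k2 : S4.sigma p q s b * S4.Hf p q r b = 0 := le_antisymm (hGb' ▸ hGb) k1
      have hσsb0 : S4.sigma p q s b = 0 :=
        (mul_eq_zero.mp k2).resolve_right (ne_of_gt hHrbpos)
      exact collinContr b h0 hσsb0
    have hσsbpos : 0 < S4.sigma p q s b := by
      rcases lt_or_eq_of_le hσsb with h | h0
      · exact h
      exfalso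
      have h0' : S4.sigma p q s b = 0 := h0.symm
      have hGb' : S4.Gf p q r s b = -(S4.sigma p q r b * S4.Hf p q s b) := by
        have : S4.Gf p q r s b = S4.sigma p q s b * S4.Hf p q r b
            - S4.sigma p q r b * S4.Hf p q s b := rfl
        rw [this, h0']; ring
      have hHsb : S4.Hf p q s b ≤ 0 := by nlinarith [hGb, hGb', hσrbneg]
      have := HsNonneg b hbI h0'
      exact sNotEnd b h0' (le_antisymm hHsb this)
    have hGb0 : S4.Gf p q r s b = 0 := by
      rcases ((hmemW b).mp hbW).1 with h | h | h
      · exact le_antisymm hGb h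
      · exact absurd h (not_le.mpr hσrbneg)
      · exact absurd h (not_le.mpr hσsbpos)
    have hcoc : CocircAt p q r s b := cocircOfG b (ne_of_lt hσrbneg) hGb0
    have hopp : OppositeSides (p b) (q b) (r b) (s b) :=
      mul_neg_of_neg_of_pos hσrbneg hσsbpos
    obtain ⟨δt, hδt, hbr⟩ := hP.circle_transversal p hpP q hqP r hrP s hsP hd4 b hcoc
    have hInBefore : ∀ u, tc < u → u < b → InCircumdisc (p u) (q u) (r u) (s u) := by
      intro u h1 h2
      refine inOfG u ?_
      have h3 := hBefore u h1 h2
      exact mul_pos_of_neg_of_neg h3.1 h3.2.1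
    rcases hbr with ⟨hbefore, hafter⟩ | ⟨hbefore, hafter⟩
    · -- correct branch : In before, Out after
      refine ⟨b, hbI, hcoc, hopp, Or.inr ?_⟩
      refine ⟨min δt (b - tc), lt_min hδt (by linarith), ?_, ?_⟩
      · intro u hu
        have hu1 : tc < u := by
          have := min_le_right δt (b - tc)
          linarith [hu.1]
        have h3 := hBefore u hu1 hu.2
        refine ⟨hbefore u ⟨?_, hu.2⟩, h3.2.2⟩
        have := min_le_left δt (b - tc)
        linarith [hu.1]
      · intro u hu
        refine hafter u ⟨hu.1, ?_⟩
        have := min_le_left δt (b - tc)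
        linarith [hu.2]
    · -- impossible branch : Out before, In after
      exfalso
      have hmax : max (b - δt) tc < b := max_lt (by linarith) hbgttc
      set u := (max (b - δt) tc + b)/2 with hudef
      have hu1 : u < b := by rw [hudef]; linarith [hmax]
      have hu2 : b - δt < u := by
        have h' : b - δt ≤ max (b - δt) tc := le_max_left _ _
        rw [hudef]; linarith [hmax]
      have hu3 : tc < u := by
        have h' : tc ≤ max (b - δt) tc := le_max_right _ _
        rw [hudef]; linarith [hmax]
      have hOut := hbefore u ⟨hu2, hu1⟩
      have hIn := hInBefore u hu3 hu1
      exact S4.not_in_out (ne_of_lt (hBefore u hu3 hu1).2.1) hIn hOut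
end
end
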